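/- arXiv:1808.10168 — 4 statements merged into one kernel-verified Lean document; each statement's English description precedes it below -/
import Mathlib

section
/- For every λ > 0 and every s > 0, (1+s)^{-λ} ≤ Σ_{k=1}^∞ 2^{-k} · 𝟙_{[0,1]}(s / 2^{k/λ}), where 𝟙_{[0,1]} is the characteristic function of the interval [0,1]. -/
open scoped ENNReal

/-- For `λ, s > 0`,
`(1+s)^{-λ} ≤ Σ_{k=1}^∞ 2^{-k} 𝟙_{[0,1]}(s / 2^{k/λ})`. -/
theorem one_add_rpow_neg_le_tsum_indicator (L s : ℝ) (hL : 0 < L) (hs : 0 < s) :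
    (1 + s) ^ (-L) ≤
      ∑' k : ℕ, (2 : ℝ) ^ (-((k : ℝ) + 1)) *
        Set.indicator (Set.Icc (0 : ℝ) 1) (fun _ => (1 : ℝ))
          (s / 2 ^ (((k : ℝ) + 1) / L)) := by
  classical
  set f : ℕ → ℝ := fun k => (2 : ℝ) ^ (-((k : ℝ) + 1)) *
        Set.indicator (Set.Icc (0 : ℝ) 1) (fun _ => (1 : ℝ))
          (s / 2 ^ (((k : ℝ) + 1) / L)) with hf
  have hfnonneg : ∀ k, 0 ≤ f k := by
    intro k
    apply mul_nonneg (Real.rpow_nonneg (by norm_num) _)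
    exact Set.indicator_nonneg (fun x _ => zero_le_one) _
  -- rewrite rpow as geometric pow
  have hrpow : ∀ k : ℕ, (2 : ℝ) ^ (-((k : ℝ) + 1)) = (2 : ℝ)⁻¹ ^ (k + 1) := by
    intro k
    rw [show (-((k : ℝ) + 1)) = -(((k + 1 : ℕ) : ℝ)) by push_cast; ring,
      Real.rpow_neg (by norm_num), Real.rpow_natCast, inv_pow]
  have hfle : ∀ k, f k ≤ (2 : ℝ)⁻¹ ^ (k + 1) := by
    intro k
    have h1 : f k ≤ (2 : ℝ) ^ (-((k : ℝ) + 1)) * 1 :=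
      mul_le_mul_of_nonneg_left (Set.indicator_le_self' (fun x _ => zero_le_one) _)
        (Real.rpow_nonneg (by norm_num) _)
    rw [mul_one, hrpow k] at h1
    exact h1
  have hsum : Summable f := by
    apply Summable.of_nonneg_of_le hfnonneg hfle
    exact (summable_geometric_of_lt_one (by norm_num) (by norm_num)).comp_injective
      (add_left_injective 1)
  -- existence of k with s ≤ 2^((k+1)/L)
  have hex : ∃ k : ℕ, s ≤ (2 : ℝ) ^ (((k : ℝ) + 1) / L) := by
    obtain ⟨n, hn⟩ := exists_nat_ge (L * Real.logb 2 s)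
    refine ⟨n, ?_⟩
    have h1 : Real.logb 2 s ≤ ((n : ℝ) + 1) / L := by
      rw [le_div_iff₀ hL, mul_comm]
      nlinarith
    calc s = (2 : ℝ) ^ Real.logb 2 s := (Real.rpow_logb (by norm_num) (by norm_num) hs).symm
      _ ≤ (2 : ℝ) ^ (((n : ℝ) + 1) / L) :=
        Real.rpow_le_rpow_of_exponent_le (by norm_num) h1
  set k₀ := Nat.find hex with hk₀
  have hk₀spec : s ≤ (2 : ℝ) ^ (((k₀ : ℝ) + 1) / L) := Nat.find_spec hex
  -- indicator is 1 for k ≥ k₀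
  have hind : ∀ j : ℕ, f (j + k₀) = (2 : ℝ) ^ (-(((j + k₀ : ℕ) : ℝ) + 1)) := by
    intro j
    have hle : s ≤ (2 : ℝ) ^ ((((j + k₀ : ℕ) : ℝ) + 1) / L) := by
      refine hk₀spec.trans (Real.rpow_le_rpow_of_exponent_le (by norm_num) ?_)
      rw [div_le_div_iff_of_pos_right hL]
      push_cast; linarith
    have hpos : (0 : ℝ) < (2 : ℝ) ^ ((((j + k₀ : ℕ) : ℝ) + 1) / L) :=
      Real.rpow_pos_of_pos (by norm_num) _
    have hmem : s / (2 : ℝ) ^ ((((j + k₀ : ℕ) : ℝ) + 1) / L) ∈ Set.Icc (0 : ℝ) 1 := by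
      constructor
      · positivity
      · rw [div_le_one hpos]; exact hle
    simp only [hf, Set.indicator_of_mem hmem, mul_one]
  -- tail sum equals 2^(-k₀)
  have htail : ∑' j : ℕ, f (j + k₀) = (2 : ℝ) ^ (-(k₀ : ℝ)) := by
    have : ∀ j : ℕ, f (j + k₀) = (2 : ℝ) ^ (-((k₀ : ℝ) + 1)) * (2 : ℝ)⁻¹ ^ j := by
      intro j
      rw [hind j]
      rw [show (-(((j + k₀ : ℕ) : ℝ) + 1)) = (-((k₀ : ℝ) + 1)) + (-(j : ℝ)) by push_cast; ring,
        Real.rpow_add (by norm_num), Real.rpow_neg (by norm_num) (j : ℝ),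
        Real.rpow_natCast, inv_pow]
    rw [tsum_congr this, tsum_mul_left, tsum_geometric_of_lt_one (by norm_num) (by norm_num)]
    rw [show ((1 : ℝ) - 2⁻¹)⁻¹ = (2 : ℝ) ^ (1 : ℝ) by rw [Real.rpow_one]; norm_num]
    rw [← Real.rpow_add (by norm_num)]
    ring_nf
  -- key bound
  have hkey : (1 + s) ^ (-L) ≤ (2 : ℝ) ^ (-(k₀ : ℝ)) := by
    rcases Nat.eq_zero_or_pos k₀ with h0 | hpos
    · rw [h0]
      simp only [Nat.cast_zero, neg_zero, Real.rpow_zero]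
      exact Real.rpow_le_one_of_one_le_of_nonpos (by linarith) (by linarith)
    · obtain ⟨m, hm⟩ := Nat.exists_eq_succ_of_ne_zero hpos.ne'
      have hnot : ¬ s ≤ (2 : ℝ) ^ (((m : ℝ) + 1) / L) := by
        apply Nat.find_min hex
        omega
      push_neg at hnot
      have h2 : (2 : ℝ) ^ ((k₀ : ℝ) / L) < 1 + s := by
        rw [hm]
        push_cast
        linarith
      have hbpos : (0 : ℝ) < (2 : ℝ) ^ ((k₀ : ℝ) / L) := Real.rpow_pos_of_pos (by norm_num) _
      calc (1 + s) ^ (-L) ≤ ((2 : ℝ) ^ ((k₀ : ℝ) / L)) ^ (-L) :=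
            Real.rpow_le_rpow_of_nonpos hbpos h2.le (by linarith)
        _ = (2 : ℝ) ^ (-(k₀ : ℝ)) := by
            rw [← Real.rpow_mul (by norm_num)]
            congr 1
            field_simp
  -- conclude
  calc (1 + s) ^ (-L) ≤ (2 : ℝ) ^ (-(k₀ : ℝ)) := hkey
    _ = ∑' j : ℕ, f (j + k₀) := htail.symm
    _ ≤ ∑' k : ℕ, f k := by
        have := (Summable.sum_add_tsum_nat_add (f := f) k₀ hsum).symm
        have hfin : 0 ≤ ∑ i ∈ Finset.range k₀, f i :=
          Finset.sum_nonneg fun i _ => hfnonneg i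
        linarith [this]
end

section
/- Fix x₀ ∈ X (a metric space). The function φ(x,t) := t / (ln(e + d(x,x₀)) + ln(e + t)) is of uniformly upper type 1 and of uniformly lower type p for every p ∈ (0,1): that is, for each p ∈ (0,1) there exists C_p > 0 such that φ(x, st) ≤ C_p s^p φ(x,t) for all x ∈ X, s ∈ [0,1], t ≥ 0, and there exists C > 0 such that φ(x, st) ≤ C s φ(x,t) for all x ∈ X, s ∈ [1,∞), t ≥ 0. Moreover, φ is not of uniformly lower type 1. -/
/-- The growth function `φ(x,t) = t / (ln(e + d(x,x₀)) + ln(e + t))`. -/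
noncomputable def logGrowth {X : Type*} [MetricSpace X] (x₀ : X) (x : X) (t : ℝ) : ℝ :=
  t / (Real.log (Real.exp 1 + dist x x₀) + Real.log (Real.exp 1 + t))

lemma log_e_add_ge_one {a : ℝ} (ha : 0 ≤ a) : 1 ≤ Real.log (Real.exp 1 + a) := by
  calc (1:ℝ) = Real.log (Real.exp 1) := (Real.log_exp 1).symm
    _ ≤ Real.log (Real.exp 1 + a) :=
      Real.log_le_log (Real.exp_pos 1) (by linarith)

/-- `s^q * (-log s) ≤ 1/q` for `0 < s ≤ 1`, `0 < q`. -/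
lemma rpow_mul_neg_log_le {s q : ℝ} (hs : 0 < s) (hs1 : s ≤ 1) (hq : 0 < q) :
    s ^ q * (-Real.log s) ≤ 1 / q := by
  have h1 : -Real.log s = (1/q) * Real.log (s ^ (-q)) := by
    rw [Real.log_rpow hs]; field_simp
  have h2 : Real.log (s ^ (-q)) ≤ s ^ (-q) - 1 :=
    Real.log_le_sub_one_of_pos (Real.rpow_pos_of_pos hs _)
  have h3 : s ^ q * s ^ (-q) = 1 := by
    rw [← Real.rpow_add hs]; simp
  have h4 : 0 ≤ s ^ q := Real.rpow_nonneg hs.le q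
  have h5 : s ^ q ≤ 1 := Real.rpow_le_one hs.le hs1 hq.le
  calc s ^ q * (-Real.log s) = (1/q) * (s ^ q * Real.log (s ^ (-q))) := by
        rw [h1]; ring
    _ ≤ (1/q) * (s ^ q * (s ^ (-q) - 1)) := by
        apply mul_le_mul_of_nonneg_left _ (by positivity)
        exact mul_le_mul_of_nonneg_left h2 h4
    _ = (1/q) * (1 - s ^ q) := by rw [mul_sub, h3, mul_one]
    _ ≤ 1 / q := by
        have h6 : (1/q) * (1 - s ^ q) ≤ (1/q) * 1 :=
          mul_le_mul_of_nonneg_left (by linarith) (by positivity)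
        linarith

/-- `φ(x,t) = t/(ln(e+d(x,x₀)) + ln(e+t))` is of uniformly upper type 1,
of uniformly lower type `p` for every `p ∈ (0,1)`, but not of uniformly lower type 1. -/
theorem logGrowth_type_properties
    {X : Type*} [MetricSpace X] [Nonempty X] (x₀ : X) :
    (∃ C : ℝ, 0 < C ∧ ∀ (x : X) (s t : ℝ), 1 ≤ s → 0 ≤ t →
      logGrowth x₀ x (s * t) ≤ C * s * logGrowth x₀ x t) ∧
    (∀ p : ℝ, 0 < p → p < 1 → ∃ C : ℝ, 0 < C ∧ ∀ (x : X) (s t : ℝ),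
      0 ≤ s → s ≤ 1 → 0 ≤ t →
      logGrowth x₀ x (s * t) ≤ C * s ^ p * logGrowth x₀ x t) ∧
    ¬ ∃ C : ℝ, 0 < C ∧ ∀ (x : X) (s t : ℝ), 0 ≤ s → s ≤ 1 → 0 ≤ t →
      logGrowth x₀ x (s * t) ≤ C * s * logGrowth x₀ x t := by
  have he : (0:ℝ) < Real.exp 1 := Real.exp_pos 1
  refine ⟨⟨1, one_pos, ?_⟩, ?_, ?_⟩
  · -- upper type 1
    intro x s t hs ht
    have hA : 1 ≤ Real.log (Real.exp 1 + dist x x₀) := log_e_add_ge_one dist_nonneg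
    have hL2 : 1 ≤ Real.log (Real.exp 1 + t) := log_e_add_ge_one ht
    have hmono : Real.log (Real.exp 1 + t) ≤ Real.log (Real.exp 1 + s * t) := by
      apply Real.log_le_log (by positivity)
      nlinarith
    unfold logGrowth
    rw [one_mul, ← mul_div_assoc]
    apply div_le_div_of_nonneg_left (by positivity) (by linarith) (by linarith)
  · -- lower type p
    intro p hp hp1
    set q := 1 - p with hqdef
    have hq : 0 < q := by simp [hqdef]; linarith
    refine ⟨1 + 1/q, by positivity, ?_⟩
    intro x s t hs0 hs1 ht
    rcases hs0.eq_or_lt with h0 | hspos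
    · simp [logGrowth, ← h0, Real.zero_rpow hp.ne']
    rcases ht.eq_or_lt with h0 | htpos
    · simp [logGrowth, ← h0]
    have hA : 1 ≤ Real.log (Real.exp 1 + dist x x₀) := log_e_add_ge_one dist_nonneg
    have hL1 : 1 ≤ Real.log (Real.exp 1 + s * t) := log_e_add_ge_one (by positivity)
    have hL2 : 1 ≤ Real.log (Real.exp 1 + t) := log_e_add_ge_one ht
    set A := Real.log (Real.exp 1 + dist x x₀)
    set L1 := Real.log (Real.exp 1 + s * t)
    set L2 := Real.log (Real.exp 1 + t)
    have hD1 : 0 < A + L1 := by linarith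
    have hD2 : 0 < A + L2 := by linarith
    -- L2 ≤ L1 - log s
    have hlog : L2 ≤ L1 - Real.log s := by
      have h1 : Real.log (s * (Real.exp 1 + t)) = Real.log s + L2 := by
        rw [Real.log_mul hspos.ne' (by positivity)]
      have h2 : s * (Real.exp 1 + t) ≤ Real.exp 1 + s * t := by nlinarith
      have h3 : Real.log (s * (Real.exp 1 + t)) ≤ L1 :=
        Real.log_le_log (by positivity) h2
      linarith
    have hpow : s ^ q * (-Real.log s) ≤ 1 / q := rpow_mul_neg_log_le hspos hs1 hq
    have hsq1 : s ^ q ≤ 1 := Real.rpow_le_one hspos.le hs1 hq.le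
    have hsq0 : 0 ≤ s ^ q := Real.rpow_nonneg hspos.le q
    have hkey : s ^ q * (A + L2) ≤ (1 + 1/q) * (A + L1) := by
      have h1 : s ^ q * (A + L2) ≤ s ^ q * (A + L1) + s ^ q * (-Real.log s) := by
        nlinarith
      have h2 : s ^ q * (A + L1) ≤ A + L1 := by nlinarith
      have h3 : (1:ℝ) / q ≤ (1/q) * (A + L1) := by
        nlinarith [one_div_pos.mpr hq]
      linarith [hpow]
    have hsplit : s = s ^ q * s ^ p := by
      rw [← Real.rpow_add hspos]
      norm_num [hqdef]
    have hsp0 : 0 ≤ s ^ p := Real.rpow_nonneg hspos.le p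
    unfold logGrowth
    rw [show (1 + 1/q) * s ^ p * (t / (A + L2)) = ((1 + 1/q) * s ^ p * t) / (A + L2) by
      ring, div_le_div_iff₀ hD1 hD2]
    have hmul := mul_le_mul_of_nonneg_right hkey (mul_nonneg hsp0 ht)
    calc s * t * (A + L2) = s ^ q * (A + L2) * (s ^ p * t) := by
          linear_combination (t * (A + L2)) * hsplit
      _ ≤ (1 + 1/q) * (A + L1) * (s ^ p * t) := hmul
      _ = (1 + 1/q) * s ^ p * t * (A + L1) := by ring
  · -- not lower type 1
    rintro ⟨C, hC, h⟩
    have hB : 1 ≤ Real.log (Real.exp 1 + 1) := log_e_add_ge_one zero_le_one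
    set B := Real.log (Real.exp 1 + 1) with hBdef
    set t := Real.exp (C * (1 + B)) with htdef
    have ht1 : 1 ≤ t := Real.one_le_exp (by positivity)
    have htpos : 0 < t := by linarith
    have hst : (1/t) * t = 1 := by field_simp
    have := h x₀ (1/t) t (by positivity) (by rw [div_le_one htpos]; exact ht1) htpos.le
    rw [hst] at this
    unfold logGrowth at this
    simp only [dist_self, add_zero, Real.log_exp] at this
    set Lt := Real.log (Real.exp 1 + t) with hLtdef
    have hLt1 : 1 ≤ Lt := log_e_add_ge_one htpos.le
    have hLtlarge : C * (1 + B) < Lt := by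
      calc C * (1 + B) = Real.log t := (Real.log_exp _).symm
        _ < Lt := Real.log_lt_log htpos (by linarith)
    have hrhs : C * (1/t) * (t / (1 + Lt)) = C / (1 + Lt) := by
      field_simp
    rw [hrhs] at this
    rw [div_le_div_iff₀ (by linarith) (by linarith)] at this
    nlinarith
end

section
/- Let (X,d,μ) be a doubling metric measure space with μ(X) < ∞, let φ be a growth function, q ∈ (1,∞], p₁ ∈ (0,1], and suppose φ is of uniformly upper type p₁ and φ ∈ ℝℍ_{(q/p₁)'}(X) (uniform reverse Hölder with exponent (q/p₁)'). Let α ∈ L^q(X) satisfy ‖α‖_{L^q(X)} ≤ μ(X)^{1/q} ‖𝟙_X‖_{L^φ(X)}^{-1}, and let T be a sublinear operator with |Tα| ≤ C₀ M(α) pointwise, where M is the Hardy–Littlewood maximal operator. Then there is a constant C, independent of α, such that for every λ ∈ ℂ, ∫_X φ(x, |λ| |Tα(x)|) dμ(x) ≤ C φ(X, |λ| ‖𝟙_X‖_{L^φ(X)}^{-1}), where φ(X,t) := ∫_X φ(x,t) dμ(x). -/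
open MeasureTheory Metric Filter
open scoped ENNReal

/-- The Luxemburg quasi-norm, valued in `ℝ≥0∞`. -/
noncomputable def luxNorm {X : Type*} [MeasurableSpace X] (μ : Measure X)
    (φ : X → ℝ → ℝ) (g : X → ℝ) : ℝ≥0∞ :=
  ⨅ (l : ℝ) (_ : 0 < l) (_ : ∫⁻ x, ENNReal.ofReal (φ x (|g x| / l)) ∂μ ≤ 1),
    ENNReal.ofReal l

/-- The uncentered Hardy–Littlewood maximal function. -/
noncomputable def maximalFn {X : Type*} [MetricSpace X] [MeasurableSpace X]
    (μ : Measure X) (f : X → ℝ≥0∞) (x : X) : ℝ≥0∞ :=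
  ⨆ (z : X) (r : ℝ) (_ : 0 < r) (_ : x ∈ ball z r),
    (∫⁻ y in ball z r, f y ∂μ) / μ (ball z r)

section helperLemmas
open Set Topology

lemma bounded_of_doubling {X : Type*} [MetricSpace X] [MeasurableSpace X] [BorelSpace X]
    (μ : Measure X) (C₁ : ℝ)
    (hdouble : ∀ (x : X) (r : ℝ), 0 < r →
      μ (ball x (2 * r)) ≤ ENNReal.ofReal C₁ * μ (ball x r))
    (hpos : ∀ (x : X) (r : ℝ), 0 < r → 0 < μ (ball x r))
    (hXfin : μ Set.univ < ⊤) (x₀ : X) :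
    ∃ R : ℝ, 0 < R ∧ ball x₀ R = Set.univ := by
  by_contra hcon
  push_neg at hcon
  have hunb : ∀ R : ℝ, 0 < R → ∃ y : X, R ≤ dist x₀ y := by
    intro R hR
    obtain ⟨y, hy⟩ := (Set.ne_univ_iff_exists_notMem _).mp (hcon R hR)
    exact ⟨y, by simpa [mem_ball, dist_comm, not_lt] using hy⟩
  set oC : ℝ≥0∞ := ENNReal.ofReal C₁ with hoC
  have hoC_ne_top : oC ≠ ⊤ := ENNReal.ofReal_ne_top
  have hballfin : ∀ (z : X) (ρ : ℝ), μ (ball z ρ) ≠ ⊤ :=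
    fun z ρ => (lt_of_le_of_lt (measure_mono (subset_univ _)) hXfin).ne
  have hoC0 : oC ≠ 0 := by
    intro h
    have h1 := hdouble x₀ 1 one_pos
    rw [h, zero_mul, nonpos_iff_eq_zero] at h1
    exact absurd (measure_mono_null (ball_subset_ball (by norm_num : (1:ℝ) ≤ 2*1)) h1)
      (hpos x₀ 1 one_pos).ne'
  set ε : ℝ≥0∞ := oC⁻¹ * oC⁻¹ with hε
  have hε0 : ε ≠ 0 := by
    simp [hε, ENNReal.inv_ne_zero, hoC_ne_top]
  -- key: for all R > 0, (1+ε) * μ (ball x₀ R) ≤ μ univ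
  have key : ∀ R : ℝ, 0 < R → (1 + ε) * μ (ball x₀ R) ≤ μ Set.univ := by
    intro R hR
    obtain ⟨y, hy⟩ := hunb (4 * R) (by linarith)
    set D : ℝ := dist x₀ y with hD
    have hD0 : 0 < D := lt_of_lt_of_le (by linarith) hy
    have hdisj : Disjoint (ball x₀ R) (ball y (D / 2)) := by
      rw [Set.disjoint_left]
      intro w hw1 hw2
      rw [mem_ball, dist_comm] at hw1
      rw [mem_ball, dist_comm] at hw2
      have : D ≤ dist x₀ w + dist y w := by
        rw [hD]
        calc dist x₀ y ≤ dist x₀ w + dist w y := dist_triangle _ _ _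
        _ = dist x₀ w + dist y w := by rw [dist_comm w y]
      nlinarith [hy]
    have hsub : ball x₀ R ⊆ ball y (2 * (2 * (D / 2))) := by
      intro w hw
      rw [mem_ball] at hw ⊢
      rw [dist_comm] at hw
      have : dist w y ≤ dist w x₀ + dist x₀ y := dist_triangle _ _ _
      rw [dist_comm w x₀] at this
      nlinarith [hy]
    have hchain : μ (ball x₀ R) ≤ oC * (oC * μ (ball y (D / 2))) := by
      calc μ (ball x₀ R) ≤ μ (ball y (2 * (2 * (D / 2)))) := measure_mono hsub
        _ ≤ oC * μ (ball y (2 * (D / 2))) := hdouble y _ (by linarith)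
        _ ≤ oC * (oC * μ (ball y (D / 2))) := by
            exact mul_le_mul_right (hdouble y _ (by linarith)) _
    have hlow : ε * μ (ball x₀ R) ≤ μ (ball y (D / 2)) := by
      calc ε * μ (ball x₀ R) ≤ ε * (oC * (oC * μ (ball y (D / 2)))) :=
            mul_le_mul_right hchain _
        _ = (oC⁻¹ * oC) * ((oC⁻¹ * oC) * μ (ball y (D / 2))) := by rw [hε]; ring
        _ = μ (ball y (D / 2)) := by
            rw [ENNReal.inv_mul_cancel hoC0 hoC_ne_top, one_mul, one_mul]
    calc (1 + ε) * μ (ball x₀ R) = μ (ball x₀ R) + ε * μ (ball x₀ R) := by ring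
      _ ≤ μ (ball x₀ R) + μ (ball y (D / 2)) := add_le_add_right hlow _
      _ = μ (ball x₀ R ∪ ball y (D / 2)) :=
          (measure_union hdisj measurableSet_ball).symm
      _ ≤ μ Set.univ := measure_mono (subset_univ _)
  -- μ univ is the sup of ball measures
  have hmono : Monotone (fun n : ℕ => ball x₀ ((n : ℝ) + 1)) := by
    intro m n hmn
    exact ball_subset_ball (by have := (Nat.cast_le (α := ℝ)).mpr hmn; linarith)
  have hcup : μ Set.univ = ⨆ n : ℕ, μ (ball x₀ ((n : ℝ) + 1)) := by
    rw [← hmono.directed_le.measure_iUnion]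
    congr 1
    symm
    apply Set.eq_univ_of_forall
    intro w
    simp only [Set.mem_iUnion, mem_ball]
    obtain ⟨n, hn⟩ := exists_nat_gt (dist w x₀)
    exact ⟨n, by linarith⟩
  have hfinal : (1 + ε) * μ Set.univ ≤ μ Set.univ := by
    conv_lhs => rw [hcup, ENNReal.mul_iSup]
    exact iSup_le fun n => key _ (by positivity)
  have hM0 : μ Set.univ ≠ 0 :=
    fun h => (hpos x₀ 1 one_pos).ne' (measure_mono_null (subset_univ _) h)
  have h1 : (1 : ℝ≥0∞) + ε ≤ 1 :=
    (ENNReal.mul_le_mul_iff_left hM0 hXfin.ne).mp (by simpa using hfinal)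
  exact absurd h1 (not_le.mpr (ENNReal.lt_add_right ENNReal.one_ne_top hε0))

lemma maximalFn_avg_le {X : Type*} [MetricSpace X] [MeasurableSpace X]
    (μ : Measure X) (f : X → ℝ≥0∞) {z : X} {r : ℝ} (hr : 0 < r) {x : X}
    (hx : x ∈ ball z r) :
    (∫⁻ y in ball z r, f y ∂μ) / μ (ball z r) ≤ maximalFn μ f x :=
  le_iSup_of_le z (le_iSup_of_le r (le_iSup_of_le hr (le_iSup_of_le hx le_rfl)))

lemma maximalFn_lsc {X : Type*} [MetricSpace X] [MeasurableSpace X]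
    (μ : Measure X) (f : X → ℝ≥0∞) :
    LowerSemicontinuous (maximalFn μ f) := by
  intro x y hy
  rw [maximalFn] at hy
  simp only [lt_iSup_iff] at hy
  obtain ⟨z, r, hr, hx, hlt⟩ := hy
  filter_upwards [isOpen_ball.mem_nhds hx] with x' hx'
  exact lt_of_lt_of_le hlt (maximalFn_avg_le μ f hr hx')

lemma maximalFn_measurable {X : Type*} [MetricSpace X] [MeasurableSpace X] [BorelSpace X]
    (μ : Measure X) (f : X → ℝ≥0∞) :
    Measurable (maximalFn μ f) :=
  (maximalFn_lsc μ f).measurable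

lemma maximalFn_congr_ae {X : Type*} [MetricSpace X] [MeasurableSpace X]
    (μ : Measure X) {f g : X → ℝ≥0∞} (h : f =ᵐ[μ] g) :
    maximalFn μ f = maximalFn μ g := by
  funext x
  unfold maximalFn
  congr 1; funext z; congr 1; funext r; congr 1; funext hr; congr 1; funext hx
  congr 1
  exact lintegral_congr_ae (ae_restrict_of_ae h)

lemma maximalFn_weak_type {X : Type*} [MetricSpace X] [MeasurableSpace X] [BorelSpace X]
    (μ : Measure X) (C₁ : ℝ)
    (hdouble : ∀ (x : X) (r : ℝ), 0 < r →
      μ (ball x (2 * r)) ≤ ENNReal.ofReal C₁ * μ (ball x r))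
    (hpos : ∀ (x : X) (r : ℝ), 0 < r → 0 < μ (ball x r))
    (hXfin : μ Set.univ < ⊤)
    (x₀ : X) (R₀ : ℝ) (hR₀ : 0 < R₀) (hX : ball x₀ R₀ = Set.univ)
    (f : X → ℝ≥0∞) (L : ℝ≥0∞) (hL0 : L ≠ 0) (hLt : L ≠ ⊤) :
    μ {x | L < maximalFn μ f x} ≤
      (ENNReal.ofReal C₁)^3 * L⁻¹ * ∫⁻ y, f y ∂μ := by
  classical
  set oC : ℝ≥0∞ := ENNReal.ofReal C₁ with hoC
  have hballfin : ∀ (z : X) (ρ : ℝ), μ (ball z ρ) ≠ ⊤ :=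
    fun z ρ => (lt_of_le_of_lt (measure_mono (subset_univ _)) hXfin).ne
  set cap : ℝ := 2 * R₀ + 1 with hcap
  -- every point of the superlevel set lies in a "good" ball of radius ≤ cap
  set t : Set (X × ℝ) := {p | 0 < p.2 ∧ p.2 ≤ cap ∧
    L * μ (ball p.1 p.2) < ∫⁻ y in ball p.1 p.2, f y ∂μ} with ht
  have hcover : {x | L < maximalFn μ f x} ⊆ ⋃ p ∈ t, ball p.1 p.2 := by
    intro x hx
    simp only [Set.mem_setOf_eq, maximalFn, lt_iSup_iff] at hx
    obtain ⟨z, r, hr, hxz, hlt⟩ := hx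
    have hgood : ∀ (ρ : ℝ), 0 < ρ →
        L < (∫⁻ y in ball z ρ, f y ∂μ) / μ (ball z ρ) →
        L * μ (ball z ρ) < ∫⁻ y in ball z ρ, f y ∂μ := by
      intro ρ hρ h
      exact (ENNReal.lt_div_iff_mul_lt (Or.inl (hpos z ρ hρ).ne') (Or.inl (hballfin z ρ))).mp h
    by_cases hrc : r ≤ cap
    · exact Set.mem_biUnion (show (z, r) ∈ t from ⟨hr, hrc, hgood r hr hlt⟩) hxz
    · push_neg at hrc
      -- both ball z r and ball z cap are the whole space
      have huniv : ∀ ρ : ℝ, 2 * R₀ < ρ → ball z ρ = Set.univ := by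
        intro ρ hρ
        apply Set.eq_univ_of_forall
        intro w
        have hw : dist w x₀ < R₀ := by rw [← Metric.mem_ball]; rw [hX]; trivial
        have hz : dist z x₀ < R₀ := by rw [← Metric.mem_ball]; rw [hX]; trivial
        rw [mem_ball]
        calc dist w z ≤ dist w x₀ + dist x₀ z := dist_triangle _ _ _
          _ = dist w x₀ + dist z x₀ := by rw [dist_comm x₀ z]
          _ < R₀ + R₀ := by linarith
          _ ≤ ρ := by linarith
      have heq : ball z r = ball z cap := by
        rw [huniv r (by linarith), huniv cap (by rw [hcap]; linarith)]
      have hcappos : 0 < cap := by rw [hcap]; linarith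
      refine Set.mem_biUnion (show (z, cap) ∈ t from ⟨hcappos, le_refl _, ?_⟩) ?_
      · exact hgood cap hcappos (by rw [← heq]; exact hlt)
      · rw [← heq]; exact hxz
  -- Vitali covering
  obtain ⟨u, hut, hdisj, hcov⟩ :=
    Vitali.exists_disjoint_subfamily_covering_enlargement
      (fun p : X × ℝ => ball p.1 p.2) t (fun p => p.2) 2 one_lt_two
      (fun a ha => (ha.1 : (0:ℝ) < a.2).le) cap (fun a ha => ha.2.1)
      (fun a ha => nonempty_ball.mpr ha.1)
  -- u is countable
  have hucnt : u.Countable := by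
    have hcnt := MeasureTheory.Measure.countable_meas_pos_of_disjoint_of_meas_iUnion_ne_top
      (ι := u) μ (As := fun b => ball b.1.1 b.1.2)
      (fun b => measurableSet_ball)
      (fun i j hij => hdisj i.2 j.2 (fun h => hij (Subtype.ext h)))
      (ne_top_of_le_ne_top hXfin.ne (measure_mono (subset_univ _)))
    have : {i : u | 0 < μ (ball i.1.1 i.1.2)} = Set.univ := by
      apply Set.eq_univ_of_forall
      intro b
      exact hpos _ _ (hut b.2).1
    rw [this] at hcnt
    rw [← Set.countable_coe_iff]
    exact countable_univ_iff.mp hcnt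
  -- the 5-times enlarged balls of u cover the superlevel set
  have hcover5 : {x | L < maximalFn μ f x} ⊆ ⋃ b ∈ u, ball b.1 (5 * b.2) := by
    intro x hx
    obtain ⟨p, hp, hxp⟩ := Set.mem_iUnion₂.mp (hcover hx)
    obtain ⟨b, hb, ⟨w, hw1, hw2⟩, hδ⟩ := hcov p hp
    refine Set.mem_iUnion₂.mpr ⟨b, hb, ?_⟩
    rw [mem_ball] at hxp hw1 hw2 ⊢
    have h1 : dist x b.1 ≤ dist x p.1 + dist p.1 w + dist w b.1 := dist_triangle4 _ _ _ _
    have h2 : dist p.1 w = dist w p.1 := dist_comm _ _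
    have hb2 : (0:ℝ) < b.2 := (hut hb).1
    nlinarith [dist_nonneg (x := x) (y := p.1)]
  calc μ {x | L < maximalFn μ f x} ≤ μ (⋃ b ∈ u, ball b.1 (5 * b.2)) := measure_mono hcover5
    _ ≤ ∑' b : u, μ (ball b.1.1 (5 * b.1.2)) := measure_biUnion_le μ hucnt _
    _ ≤ ∑' b : u, oC^3 * L⁻¹ * (∫⁻ y in ball b.1.1 b.1.2, f y ∂μ) := by
        apply ENNReal.tsum_le_tsum
        intro b
        have hb2 : (0:ℝ) < b.1.2 := (hut b.2).1
        have hd3 : μ (ball b.1.1 (5 * b.1.2)) ≤ oC^3 * μ (ball b.1.1 b.1.2) := by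
          calc μ (ball b.1.1 (5 * b.1.2)) ≤ μ (ball b.1.1 (2 * (2 * (2 * b.1.2)))) :=
                measure_mono (ball_subset_ball (by linarith))
            _ ≤ oC * μ (ball b.1.1 (2 * (2 * b.1.2))) := hdouble _ _ (by linarith)
            _ ≤ oC * (oC * μ (ball b.1.1 (2 * b.1.2))) :=
                mul_le_mul_right (hdouble _ _ (by linarith)) _
            _ ≤ oC * (oC * (oC * μ (ball b.1.1 b.1.2))) :=
                mul_le_mul_right (mul_le_mul_right (hdouble _ _ hb2) _) _
            _ = oC^3 * μ (ball b.1.1 b.1.2) := by ring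
        refine hd3.trans ?_
        have : μ (ball b.1.1 b.1.2) = L⁻¹ * (L * μ (ball b.1.1 b.1.2)) := by
          rw [← mul_assoc, ENNReal.inv_mul_cancel hL0 hLt, one_mul]
        rw [this, ← mul_assoc]
        exact mul_le_mul_right ((hut b.2).2.2).le _
    _ = oC^3 * L⁻¹ * ∑' b : u, (∫⁻ y in ball b.1.1 b.1.2, f y ∂μ) := ENNReal.tsum_mul_left
    _ ≤ oC^3 * L⁻¹ * ∫⁻ y, f y ∂μ := by
        apply mul_le_mul_right
        have := hucnt.to_subtype
        rw [← lintegral_iUnion (fun b : u => measurableSet_ball)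
          (fun i j hij => hdisj i.2 j.2 (fun h => hij (Subtype.ext h))) f]
        exact setLIntegral_le_lintegral _ _

-- maximalFn is subadditive w.r.t. adding a constant
lemma maximalFn_add_const {X : Type*} [MetricSpace X] [MeasurableSpace X]
    (μ : Measure X)
    (hpos : ∀ (x : X) (r : ℝ), 0 < r → 0 < μ (ball x r))
    (hXfin : μ Set.univ < ⊤)
    (f g : X → ℝ≥0∞) (c : ℝ≥0∞) (hfg : ∀ y, f y ≤ g y + c) (x : X) :
    maximalFn μ f x ≤ maximalFn μ g x + c := by
  apply iSup_le; intro z; apply iSup_le; intro r; apply iSup_le; intro hr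
  apply iSup_le; intro hx
  have hb0 : μ (ball z r) ≠ 0 := (hpos z r hr).ne'
  have hbt : μ (ball z r) ≠ ⊤ := (lt_of_le_of_lt (measure_mono (subset_univ _)) hXfin).ne
  calc (∫⁻ y in ball z r, f y ∂μ) / μ (ball z r)
      ≤ (∫⁻ y in ball z r, (g y + c) ∂μ) / μ (ball z r) := by
        gcongr with y
        exact hfg y
    _ = ((∫⁻ y in ball z r, g y ∂μ) + c * μ (ball z r)) / μ (ball z r) := by
        rw [lintegral_add_right' _ aemeasurable_const, lintegral_const,
          Measure.restrict_apply_univ]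
    _ = (∫⁻ y in ball z r, g y ∂μ) / μ (ball z r) + c * μ (ball z r) / μ (ball z r) :=
        ENNReal.add_div
    _ ≤ maximalFn μ g x + c := by
        apply add_le_add (maximalFn_avg_le μ g hr hx)
        rw [mul_div_assoc, ENNReal.div_self hb0 hbt, mul_one]

lemma maximalFn_strong_type {X : Type*} [MetricSpace X] [MeasurableSpace X] [BorelSpace X]
    (μ : Measure X) (C₁ : ℝ)
    (hdouble : ∀ (x : X) (r : ℝ), 0 < r →
      μ (ball x (2 * r)) ≤ ENNReal.ofReal C₁ * μ (ball x r))
    (hpos : ∀ (x : X) (r : ℝ), 0 < r → 0 < μ (ball x r))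
    (hXfin : μ Set.univ < ⊤)
    (x₀ : X) (R₀ : ℝ) (hR₀ : 0 < R₀) (hX : ball x₀ R₀ = Set.univ)
    (α' : X → ℝ) (hα' : Measurable α') (s : ℝ) (hs : 1 < s)
    (hint : ∫⁻ x, ENNReal.ofReal |α' x| ∂μ ≠ ⊤) :
    ∫⁻ x, (maximalFn μ (fun y => ENNReal.ofReal |α' y|) x) ^ s ∂μ ≤
      (ENNReal.ofReal C₁)^3 * ENNReal.ofReal (s * (4 ^ s / (s - 1))) *
        ∫⁻ x, (ENNReal.ofReal |α' x|) ^ s ∂μ := by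
  classical
  haveI : IsFiniteMeasure μ := ⟨hXfin⟩
  set oC : ℝ≥0∞ := ENNReal.ofReal C₁ with hoC
  set f : X → ℝ≥0∞ := fun y => ENNReal.ofReal |α' y| with hf
  set Mf : X → ℝ≥0∞ := maximalFn μ f with hMf
  have hMfmeas : Measurable Mf := maximalFn_measurable μ f
  have hfmeas : Measurable f := hα'.abs.ennreal_ofReal
  have hfne : ∀ y, f y ≠ ⊤ := fun y => ENNReal.ofReal_ne_top
  have hs0 : (0:ℝ) < s := by linarith
  have hs1 : (0:ℝ) < s - 1 := by linarith
  -- Mf is finite a.e.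
  have hMffin : ∀ᵐ x ∂μ, Mf x ≠ ⊤ := by
    have hwk : ∀ n : ℕ, μ {x | Mf x = ⊤} ≤ (oC^3 * ∫⁻ y, f y ∂μ) * ((n:ℝ≥0∞))⁻¹ := by
      intro n
      have hsub : {x | Mf x = ⊤} ⊆ {x | ((n:ℝ≥0∞)+1) < Mf x} := by
        intro x hx
        simp only [Set.mem_setOf_eq] at hx ⊢
        rw [hx]
        exact lt_top_iff_ne_top.mpr (by simp)
      calc μ {x | Mf x = ⊤} ≤ μ {x | ((n:ℝ≥0∞)+1) < Mf x} := measure_mono hsub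
        _ ≤ oC^3 * ((n:ℝ≥0∞)+1)⁻¹ * ∫⁻ y, f y ∂μ :=
            maximalFn_weak_type μ C₁ hdouble hpos hXfin x₀ R₀ hR₀ hX f ((n:ℝ≥0∞)+1)
              (by simp) (by simp)
        _ ≤ oC^3 * ((n:ℝ≥0∞))⁻¹ * ∫⁻ y, f y ∂μ := by
            gcongr
            exact le_self_add
        _ = (oC^3 * ∫⁻ y, f y ∂μ) * ((n:ℝ≥0∞))⁻¹ := by ring
    have htend : Tendsto (fun n : ℕ => (oC^3 * ∫⁻ y, f y ∂μ) * ((n:ℝ≥0∞))⁻¹) atTop (𝓝 0) := by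
      have hc3 : oC^3 ≠ ⊤ := by simp [hoC]
      have h0 := ENNReal.Tendsto.const_mul (m := fun n : ℕ => ((n:ℝ≥0∞))⁻¹)
        (b := 0) (a := oC^3 * ∫⁻ y, f y ∂μ) ENNReal.tendsto_inv_nat_nhds_zero
        (Or.inr (ENNReal.mul_ne_top hc3 hint))
      simpa [mul_comm] using h0
    have hzero : μ {x | Mf x = ⊤} = 0 :=
      le_antisymm (ge_of_tendsto' htend hwk) zero_le
    rw [ae_iff]
    simpa using hzero
  -- rewrite via toReal
  set g : X → ℝ := fun x => (Mf x).toReal with hg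
  have hgmeas : Measurable g := hMfmeas.ennreal_toReal
  have key_eq : ∫⁻ x, Mf x ^ s ∂μ = ∫⁻ x, ENNReal.ofReal (g x ^ s) ∂μ := by
    apply lintegral_congr_ae
    filter_upwards [hMffin] with x hx
    have hgx : g x = (Mf x).toReal := rfl
    rw [hgx, ← ENNReal.ofReal_rpow_of_nonneg ENNReal.toReal_nonneg hs0.le,
      ENNReal.ofReal_toReal hx]
  have layer := lintegral_rpow_eq_lintegral_meas_le_mul μ
    (f := g) (Eventually.of_forall (fun x => ENNReal.toReal_nonneg)) hgmeas.aemeasurable hs0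
  -- distribution estimate
  have hdist : ∀ t : ℝ, 0 < t → μ {a | t ≤ g a} ≤
      oC^3 * (ENNReal.ofReal (t/4))⁻¹ * ∫⁻ y in {y | t/4 < |α' y|}, f y ∂μ := by
    intro t ht
    set S : Set X := {y | t/4 < |α' y|} with hS
    have hSmeas : MeasurableSet S := measurableSet_lt measurable_const hα'.abs
    set f₁ : X → ℝ≥0∞ := S.indicator f with hf₁
    have hfle : ∀ y, f y ≤ f₁ y + ENNReal.ofReal (t/4) := by
      intro y
      by_cases hy : y ∈ S
      · rw [hf₁, Set.indicator_of_mem hy]; exact le_self_add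
      · rw [hf₁, Set.indicator_of_notMem hy, zero_add]
        simp only [hS, Set.mem_setOf_eq, not_lt] at hy
        exact ENNReal.ofReal_le_ofReal hy
    have hsub1 : {a | t ≤ g a} ⊆ {a | ENNReal.ofReal (t/2) < Mf a} := by
      intro a ha
      simp only [Set.mem_setOf_eq] at ha ⊢
      rcases eq_or_ne (Mf a) ⊤ with h | h
      · rw [h]; exact ENNReal.ofReal_lt_top
      · calc ENNReal.ofReal (t/2) < ENNReal.ofReal t := by
              rw [ENNReal.ofReal_lt_ofReal_iff ht]; linarith
          _ ≤ Mf a := by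
              rw [← ENNReal.ofReal_toReal h]
              exact ENNReal.ofReal_le_ofReal ha
    have hsub2 : {a | ENNReal.ofReal (t/2) < Mf a} ⊆
        {a | ENNReal.ofReal (t/4) < maximalFn μ f₁ a} := by
      intro a ha
      simp only [Set.mem_setOf_eq] at ha ⊢
      by_contra hcon
      push_neg at hcon
      have h1 : Mf a ≤ maximalFn μ f₁ a + ENNReal.ofReal (t/4) :=
        maximalFn_add_const μ hpos hXfin f f₁ _ hfle a
      have h2 : Mf a ≤ ENNReal.ofReal (t/2) := by
        calc Mf a ≤ maximalFn μ f₁ a + ENNReal.ofReal (t/4) := h1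
          _ ≤ ENNReal.ofReal (t/4) + ENNReal.ofReal (t/4) := add_le_add_left hcon _
          _ = ENNReal.ofReal (t/2) := by
              rw [← ENNReal.ofReal_add (by linarith) (by linarith)]
              congr 1
              ring
      exact absurd (ha.trans_le h2) (lt_irrefl _)
    calc μ {a | t ≤ g a} ≤ μ {a | ENNReal.ofReal (t/4) < maximalFn μ f₁ a} :=
          measure_mono (hsub1.trans hsub2)
      _ ≤ oC^3 * (ENNReal.ofReal (t/4))⁻¹ * ∫⁻ y, f₁ y ∂μ :=
          maximalFn_weak_type μ C₁ hdouble hpos hXfin x₀ R₀ hR₀ hX f₁ _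
            (by simp [ENNReal.ofReal_pos.mpr (by linarith : (0:ℝ) < t/4), ne_of_gt]
                ) ENNReal.ofReal_ne_top
      _ = oC^3 * (ENNReal.ofReal (t/4))⁻¹ * ∫⁻ y in S, f y ∂μ := by
          rw [hf₁, lintegral_indicator hSmeas]
  -- the double-integral function
  set H : ℝ → X → ℝ≥0∞ :=
    fun t x => (if t/4 < |α' x| then f x else 0) * ENNReal.ofReal (4 * t^(s-2)) with hH
  have hHmeas : Measurable (Function.uncurry H) := by
    apply Measurable.mul
    · apply Measurable.ite
      · exact measurableSet_lt (measurable_fst.div_const 4) (hα'.abs.comp measurable_snd)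
      · exact hfmeas.comp measurable_snd
      · exact measurable_const
    · apply Measurable.ennreal_ofReal
      exact measurable_const.mul (measurable_fst.pow_const (s-2))
  -- pointwise bound on the t-integrand
  have hptwise : ∀ t ∈ Ioi (0:ℝ), μ {a | t ≤ g a} * ENNReal.ofReal (t^(s-1)) ≤
      oC^3 * ∫⁻ x, H t x ∂μ := by
    intro t ht
    rw [Set.mem_Ioi] at ht
    have hc : (ENNReal.ofReal (t/4))⁻¹ * ENNReal.ofReal (t^(s-1)) =
        ENNReal.ofReal (4 * t^(s-2)) := by
      rw [← ENNReal.ofReal_inv_of_pos (by linarith : (0:ℝ) < t/4),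
        ← ENNReal.ofReal_mul (by positivity)]
      congr 1
      have htne : t ≠ 0 := ne_of_gt ht
      have h1 : t^(s-1) = t * t^(s-2) := by
        rw [← Real.rpow_one_add' (le_of_lt ht) (by intro hcon; linarith : 1 + (s-2) ≠ 0)]
        have : (1:ℝ) + (s-2) = s - 1 := by ring
        rw [this]
      rw [h1]
      field_simp
    have hint_eq : ∫⁻ x, H t x ∂μ =
        (∫⁻ y in {y | t/4 < |α' y|}, f y ∂μ) * ENNReal.ofReal (4 * t^(s-2)) := by
      rw [hH]
      simp only
      rw [lintegral_mul_const' _ _ ENNReal.ofReal_ne_top]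
      congr 1
      have : (fun x => if t/4 < |α' x| then f x else 0) =
          Set.indicator {y | t/4 < |α' y|} f := by
        funext x
        rw [Set.indicator_apply]
        rfl
      rw [this, lintegral_indicator (measurableSet_lt measurable_const hα'.abs)]
    calc μ {a | t ≤ g a} * ENNReal.ofReal (t^(s-1))
        ≤ (oC^3 * (ENNReal.ofReal (t/4))⁻¹ * ∫⁻ y in {y | t/4 < |α' y|}, f y ∂μ) *
            ENNReal.ofReal (t^(s-1)) := mul_le_mul_left (hdist t ht) _
      _ = oC^3 * ((∫⁻ y in {y | t/4 < |α' y|}, f y ∂μ) *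
            ((ENNReal.ofReal (t/4))⁻¹ * ENNReal.ofReal (t^(s-1)))) := by ring
      _ = oC^3 * ∫⁻ x, H t x ∂μ := by rw [hc, hint_eq]
  -- inner t-integral computation
  have hinner : ∀ x : X, ∫⁻ t in Ioi (0:ℝ), H t x ≤
      ENNReal.ofReal (4^s / (s-1)) * f x ^ s := by
    intro x
    set b : ℝ := |α' x| with hb
    have hbnn : 0 ≤ b := abs_nonneg _
    rcases eq_or_lt_of_le hbnn with hb0 | hb0
    · -- b = 0 : integrand vanishes
      have : ∀ t ∈ Ioi (0:ℝ), H t x = 0 := by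
        intro t ht
        rw [Set.mem_Ioi] at ht
        rw [hH]
        simp only
        rw [if_neg (by rw [← hb, ← hb0]; linarith), zero_mul]
      rw [setLIntegral_congr_fun measurableSet_Ioi this]
      simp
    · -- b > 0
      have hHx : ∀ t : ℝ, H t x = f x * ((Iio (4*b)).indicator
          (fun t => ENNReal.ofReal (4 * t^(s-2))) t) := by
        intro t
        rw [hH, Set.indicator_apply]
        simp only [Set.mem_Iio]
        have : t/4 < |α' x| ↔ t < 4*b := by rw [← hb]; constructor <;> intro <;> linarith
        by_cases hcond : t < 4*b
        · rw [if_pos (this.mpr hcond), if_pos hcond, mul_comm]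
        · rw [if_neg (fun hh => hcond (this.mp hh)), if_neg hcond, zero_mul, mul_zero]
      simp_rw [hHx]
      rw [lintegral_const_mul' _ _ (hfne x)]
      have hJ : ∫⁻ t in Ioi (0:ℝ), (Iio (4*b)).indicator
          (fun t => ENNReal.ofReal (4 * t^(s-2))) t = ENNReal.ofReal (4^s * b^(s-1) / (s-1)) := by
        rw [lintegral_indicator measurableSet_Iio, Measure.restrict_restrict measurableSet_Iio]
        have hIoo : Iio (4*b) ∩ Ioi 0 = Ioo 0 (4*b) := by
          ext u; simp [Set.mem_Ioo, and_comm]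
        rw [hIoo]
        have hintg : IntegrableOn (fun t : ℝ => 4 * t^(s-2)) (Ioo 0 (4*b)) volume := by
          have h1 : IntervalIntegrable (fun t : ℝ => t^(s-2)) volume 0 (4*b) :=
            intervalIntegral.intervalIntegrable_rpow' (by linarith)
          exact ((h1.1.mono_set Ioo_subset_Ioc_self).const_mul 4)
        rw [← MeasureTheory.ofReal_integral_eq_lintegral_ofReal hintg]
        · congr 1
          rw [← integral_Ioc_eq_integral_Ioo, ← intervalIntegral.integral_of_le (by positivity),
            intervalIntegral.integral_const_mul, integral_rpow (Or.inl (by linarith))]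
          rw [Real.zero_rpow (by intro hcon; apply hs1.ne'; linarith)]
          have he : s - 2 + 1 = s - 1 := by ring
          rw [he, Real.mul_rpow (by norm_num) hbnn]
          have h4 : (4:ℝ)^s = 4 * 4^(s-1) := by
            rw [← Real.rpow_one_add' (by norm_num) (by intro hcon; linarith : 1 + (s-1) ≠ 0)]
            have : (1:ℝ) + (s-1) = s := by ring
            rw [this]
          rw [h4]
          ring
        · filter_upwards [self_mem_ae_restrict measurableSet_Ioo] with u hu
          have : (0:ℝ) < u := hu.1
          positivity
      rw [hJ]
      have hfxs : f x ^ s = ENNReal.ofReal (b ^ s) := by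
        rw [hf]
        simp only
        rw [← hb, ENNReal.ofReal_rpow_of_nonneg hbnn hs0.le]
      have hfx : f x = ENNReal.ofReal b := by rw [hf]
      rw [hfxs, hfx, ← ENNReal.ofReal_mul hbnn, ← ENNReal.ofReal_mul (by positivity)]
      apply ENNReal.ofReal_le_ofReal
      have hbs : b * b^(s-1) = b^s := by
        rw [← Real.rpow_one_add' hbnn (by intro hcon; linarith : 1 + (s-1) ≠ 0)]
        have : (1:ℝ) + (s-1) = s := by ring
        rw [this]
      apply le_of_eq
      rw [← hbs]
      ring
  -- assemble
  have hoCne : oC^3 ≠ ⊤ := by simp [hoC]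
  calc ∫⁻ x, Mf x ^ s ∂μ
      = ENNReal.ofReal s * ∫⁻ t in Ioi (0:ℝ), μ {a | t ≤ g a} * ENNReal.ofReal (t^(s-1)) := by
        rw [key_eq, layer]
    _ ≤ ENNReal.ofReal s * ∫⁻ t in Ioi (0:ℝ), oC^3 * ∫⁻ x, H t x ∂μ := by
        apply mul_le_mul_right
        apply setLIntegral_mono (Measurable.const_mul (hHmeas.lintegral_prod_right) _) hptwise
    _ = ENNReal.ofReal s * (oC^3 * ∫⁻ t in Ioi (0:ℝ), ∫⁻ x, H t x ∂μ) := by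
        rw [lintegral_const_mul' _ _ hoCne]
    _ = ENNReal.ofReal s * (oC^3 * ∫⁻ x, (∫⁻ t in Ioi (0:ℝ), H t x ∂volume) ∂μ) := by
        rw [lintegral_lintegral_swap hHmeas.aemeasurable]
    _ ≤ ENNReal.ofReal s * (oC^3 * ∫⁻ x, ENNReal.ofReal (4^s / (s-1)) * f x ^ s ∂μ) := by
        exact mul_le_mul_right (mul_le_mul_right (lintegral_mono hinner) _) _
    _ = oC^3 * ENNReal.ofReal (s * (4 ^ s / (s - 1))) * ∫⁻ x, f x ^ s ∂μ := by
        rw [lintegral_const_mul' _ _ ENNReal.ofReal_ne_top,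
          ENNReal.ofReal_mul hs0.le]
        ring

end helperLemmas

/-- Estimate for single atoms: if `‖α‖_{L^q} ≤ μ(X)^{1/q} ‖𝟙_X‖_{L^φ}^{-1}`
and `|Tα| ≤ C₀ M(α)`, then
`∫_X φ(x, |λ| |Tα(x)|) dμ ≤ C φ(X, |λ| ‖𝟙_X‖_{L^φ}^{-1})` for every `λ ∈ ℂ`. -/
theorem single_atom_estimate
    {X : Type*} [MetricSpace X] [MeasurableSpace X] [BorelSpace X]
    (μ : Measure X) (C₁ : ℝ)
    (hdouble : ∀ (x : X) (r : ℝ), 0 < r →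
      μ (ball x (2 * r)) ≤ ENNReal.ofReal C₁ * μ (ball x r))
    (hpos : ∀ (x : X) (r : ℝ), 0 < r → 0 < μ (ball x r))
    (hfin : ∀ (x : X) (r : ℝ), 0 < r → μ (ball x r) < ⊤)
    (hXfin : μ Set.univ < ⊤)
    (φ : X → ℝ → ℝ)
    (hnn : ∀ x t, 0 ≤ t → 0 ≤ φ x t)
    (hmono : ∀ x, MonotoneOn (φ x) (Set.Ici 0))
    (h0 : ∀ x, φ x 0 = 0)
    (hposφ : ∀ x t, 0 < t → 0 < φ x t)
    (hlim : ∀ x, Tendsto (φ x) atTop atTop)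
    (hmeas : ∀ t : ℝ, Measurable fun x => φ x t)
    (p₁ : ℝ) (hp₁ : 0 < p₁) (hp₁1 : p₁ ≤ 1)
    (Cu : ℝ) (hCu : 0 < Cu)
    (hup : ∀ (x : X) (s t : ℝ), 1 ≤ s → 0 ≤ t → φ x (s * t) ≤ Cu * s ^ p₁ * φ x t)
    (q : ℝ≥0∞) (hq : 1 < q)
    (r : ℝ≥0∞) (hr : 1 / r + ENNReal.ofReal p₁ / q = 1)
    (ARH : ℝ) (hARH : 0 < ARH)
    (hRH : ∀ t : ℝ, 0 < t → ∀ (x : X) (ρ : ℝ), 0 < ρ →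
      eLpNorm (fun y => φ y t) r (μ.restrict (ball x ρ)) * μ (ball x ρ) ≤
        ENNReal.ofReal ARH * μ (ball x ρ) ^ (1 / r).toReal *
          ∫⁻ y in ball x ρ, ENNReal.ofReal (φ y t) ∂μ)
    (α : X → ℝ) (hαm : AEStronglyMeasurable α μ)
    (hα : eLpNorm α q μ ≤
      μ Set.univ ^ (1 / q).toReal * (luxNorm μ φ fun _ => 1)⁻¹)
    (Tα : X → ℝ) (C₀ : ℝ) (hC₀ : 0 < C₀)
    (hT : ∀ x, ENNReal.ofReal |Tα x| ≤
      ENNReal.ofReal C₀ * maximalFn μ (fun y => ENNReal.ofReal |α y|) x) :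
    ∃ C : ℝ, 0 < C ∧ ∀ c : ℂ,
      ∫⁻ x, ENNReal.ofReal (φ x (‖c‖ * |Tα x|)) ∂μ ≤
        ENNReal.ofReal C *
          ∫⁻ x, ENNReal.ofReal
            (φ x (‖c‖ * ((luxNorm μ φ fun _ => 1)⁻¹).toReal)) ∂μ := by
  classical
  by_cases hμ0 : μ Set.univ = 0
  · refine ⟨1, one_pos, fun c => ?_⟩
    have hμ : μ = 0 := Measure.measure_univ_eq_zero.mp hμ0
    simp [hμ]
  set N : ℝ≥0∞ := luxNorm μ φ (fun _ => 1) with hNdef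
  -- N is not zero
  have hN0 : N ≠ 0 := by
    intro hN
    have hcond : ∀ n : ℕ, ∫⁻ x, ENNReal.ofReal (φ x ((n:ℝ) + 1)) ∂μ ≤ 1 := by
      intro n
      have hln : (0:ℝ) < 1/((n:ℝ)+1) := by positivity
      have hlt : N < ENNReal.ofReal (1/((n:ℝ)+1)) := by
        rw [hN]; exact ENNReal.ofReal_pos.mpr hln
      rw [hNdef, luxNorm] at hlt
      simp only [iInf_lt_iff] at hlt
      obtain ⟨l, hl, hcondl, hllt⟩ := hlt
      have hlle : l < 1/((n:ℝ)+1) :=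
        (ENNReal.ofReal_lt_ofReal_iff hln).mp hllt
      refine le_trans (le_trans ?_ (le_of_eq rfl)) hcondl
      apply lintegral_mono
      intro x
      apply ENNReal.ofReal_le_ofReal
      have h1 : (n:ℝ) + 1 ≤ |(1:ℝ)| / l := by
        rw [abs_one]
        rw [le_div_iff₀ hl]
        calc ((n:ℝ)+1) * l ≤ ((n:ℝ)+1) * (1/((n:ℝ)+1)) := by
              apply mul_le_mul_of_nonneg_left hlle.le (by positivity)
          _ = 1 := by field_simp
      exact hmono x (by simp; positivity) (Set.mem_Ici.mpr (by positivity)) h1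
    -- Fatou contradiction
    have hliminf : ∀ x : X, Filter.atTop.liminf
        (fun n : ℕ => ENNReal.ofReal (φ x ((n:ℝ) + 1))) = ⊤ := by
      intro x
      apply Filter.Tendsto.liminf_eq
      have h1 : Tendsto (fun n : ℕ => (n:ℝ) + 1) atTop atTop :=
        tendsto_atTop_add_const_right _ 1 tendsto_natCast_atTop_atTop
      have h2 : Tendsto (fun n : ℕ => φ x ((n:ℝ) + 1)) atTop atTop := (hlim x).comp h1
      exact ENNReal.tendsto_ofReal_atTop.comp h2
    have hF := lintegral_liminf_le (μ := μ) (u := atTop)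
      (f := fun (n : ℕ) (x : X) => ENNReal.ofReal (φ x ((n:ℝ) + 1)))
      (fun n => (hmeas _).ennreal_ofReal)
    have hFle : (∫⁻ x, Filter.atTop.liminf
        (fun n : ℕ => ENNReal.ofReal (φ x ((n:ℝ) + 1))) ∂μ) ≤ 1 := by
      refine hF.trans ?_
      calc Filter.atTop.liminf (fun n : ℕ => ∫⁻ x, ENNReal.ofReal (φ x ((n:ℝ) + 1)) ∂μ)
          ≤ Filter.atTop.liminf (fun _ : ℕ => (1:ℝ≥0∞)) := Filter.liminf_le_liminf
            (Filter.Eventually.of_forall hcond)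
        _ = 1 := Filter.liminf_const 1
    rw [lintegral_congr (fun x => hliminf x)] at hFle
    rw [lintegral_const] at hFle
    rw [ENNReal.top_mul hμ0] at hFle
    exact absurd hFle (by simp)
  -- q ≠ 0
  have hq0 : q ≠ 0 := (zero_lt_one.trans hq).ne'
  by_cases hNt : N = ⊤
  · -- then α = 0 a.e. and Tα ≡ 0
    have hα0 : eLpNorm α q μ = 0 := by
      have h := hα
      rw [hNt] at h
      simpa using h
    have hae0 : α =ᵐ[μ] 0 := (eLpNorm_eq_zero_iff hαm hq0).mp hα0
    have hM0 : ∀ x, maximalFn μ (fun y => ENNReal.ofReal |α y|) x = 0 := by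
      intro x
      have hzero : (fun y => ENNReal.ofReal |α y|) =ᵐ[μ] (fun _ => 0) := by
        filter_upwards [hae0] with y hy
        simp [hy]
      rw [maximalFn_congr_ae μ hzero]
      unfold maximalFn
      simp
    have hTα0 : ∀ x, Tα x = 0 := by
      intro x
      have := hT x
      rw [hM0 x, mul_zero, nonpos_iff_eq_zero, ENNReal.ofReal_eq_zero] at this
      exact abs_eq_zero.mp (le_antisymm this (abs_nonneg _))
    refine ⟨1, one_pos, fun c => ?_⟩
    have : ∀ x, ENNReal.ofReal (φ x (‖c‖ * |Tα x|)) = 0 := by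
      intro x
      rw [hTα0 x]
      simp [h0]
    rw [lintegral_congr this]
    simp
  -- main case : 0 < N < ⊤
  have hXne : Nonempty X := by
    by_contra hcon
    rw [not_nonempty_iff] at hcon
    apply hμ0
    have : (Set.univ : Set X) = ∅ := Set.univ_eq_empty_iff.mpr hcon
    rw [this, measure_empty]
  obtain ⟨x₀⟩ := hXne
  obtain ⟨R₀, hR₀, hXball⟩ := bounded_of_doubling μ C₁ hdouble hpos hXfin x₀
  set a : ℝ := (N⁻¹).toReal with hadef
  have hNinv_ne_top : N⁻¹ ≠ ⊤ := ENNReal.inv_ne_top.mpr hN0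
  have hofa : ENNReal.ofReal a = N⁻¹ := ENNReal.ofReal_toReal hNinv_ne_top
  have ha : 0 < a := ENNReal.toReal_pos (ENNReal.inv_ne_zero.mpr hNt) hNinv_ne_top
  -- measurable version of α
  set α' : X → ℝ := hαm.mk α with hα'def
  have hα'meas : Measurable α' := hαm.measurable_mk
  have hae : α =ᵐ[μ] α' := hαm.ae_eq_mk
  set f : X → ℝ≥0∞ := fun y => ENNReal.ofReal |α' y| with hfdef
  set M : X → ℝ≥0∞ := maximalFn μ f with hMdef
  have hMmeas : Measurable M := maximalFn_measurable μ f
  have hTM : ∀ x, ENNReal.ofReal |Tα x| ≤ ENNReal.ofReal C₀ * M x := by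
    intro x
    have hcongr : (fun y => ENNReal.ofReal |α y|) =ᵐ[μ] f := by
      filter_upwards [hae] with y hy
      rw [hfdef]
      simp only
      rw [hy]
    rw [hMdef, ← maximalFn_congr_ae μ hcongr]
    exact hT x
  -- pointwise upper-type estimate
  set Cu' : ℝ := max Cu 1 with hCu'def
  have hCu'1 : 1 ≤ Cu' := le_max_right _ _
  have hupper : ∀ (x : X) (v t₀ : ℝ), 0 ≤ v → 0 < t₀ →
      φ x v ≤ Cu' * ((v/t₀)^p₁ + 1) * φ x t₀ := by
    intro x v t₀ hv ht₀
    rcases le_or_gt v t₀ with hvt | hvt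
    · have h1 : φ x v ≤ φ x t₀ := hmono x (Set.mem_Ici.mpr hv) (Set.mem_Ici.mpr ht₀.le) hvt
      have h2 : (1:ℝ) ≤ Cu' * ((v/t₀)^p₁ + 1) := by
        have : (0:ℝ) ≤ (v/t₀)^p₁ := Real.rpow_nonneg (by positivity) _
        nlinarith
      nlinarith [mul_nonneg (sub_nonneg.mpr h2) (hnn x t₀ ht₀.le), hnn x t₀ ht₀.le]
    · have hs1 : 1 ≤ v / t₀ := (one_le_div ht₀).mpr hvt.le
      have h1 : φ x v = φ x ((v/t₀) * t₀) := by rw [div_mul_cancel₀ _ ht₀.ne']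
      rw [h1]
      calc φ x ((v/t₀) * t₀) ≤ Cu * (v/t₀)^p₁ * φ x t₀ := hup x _ _ hs1 ht₀.le
        _ ≤ Cu' * ((v/t₀)^p₁ + 1) * φ x t₀ := by
            have h2 : (0:ℝ) ≤ (v/t₀)^p₁ := Real.rpow_nonneg (by positivity) _
            have h3 : Cu ≤ Cu' := le_max_left _ _
            have h4 : Cu * (v/t₀)^p₁ ≤ Cu' * ((v/t₀)^p₁ + 1) := by nlinarith
            exact mul_le_mul_of_nonneg_right h4 (hnn x t₀ ht₀.le)
  
  by_cases hqt : q = ⊤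
  · -- q = ∞ : easy case
    have hEtop : eLpNorm α ⊤ μ ≤ N⁻¹ := by
      have h := hα
      rw [hqt] at h
      simpa using h
    have hfa : ∀ᵐ y ∂μ, f y ≤ N⁻¹ := by
      have h1 : ∀ᵐ y ∂μ, (‖α' y‖₊ : ℝ≥0∞) ≤ eLpNormEssSup α' μ := ae_le_eLpNormEssSup
      filter_upwards [h1] with y hy
      have h2 : f y = (‖α' y‖₊ : ℝ≥0∞) := (Real.enorm_eq_ofReal_abs _).symm
      rw [h2]
      refine hy.trans ?_
      rw [← eLpNorm_exponent_top, ← eLpNorm_congr_ae hae]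
      exact hEtop
    have hMle : ∀ x, M x ≤ N⁻¹ := by
      intro x
      rw [hMdef]
      unfold maximalFn
      apply iSup_le; intro z; apply iSup_le; intro ρ; apply iSup_le; intro hρ
      apply iSup_le; intro hx
      apply ENNReal.div_le_of_le_mul
      calc ∫⁻ y in ball z ρ, f y ∂μ ≤ ∫⁻ _ in ball z ρ, N⁻¹ ∂μ :=
            lintegral_mono_ae (ae_restrict_of_ae hfa)
        _ = N⁻¹ * μ (ball z ρ) := by rw [lintegral_const, Measure.restrict_apply_univ]
    have hTreal : ∀ x, |Tα x| ≤ C₀ * a := by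
      intro x
      have h1 : ENNReal.ofReal |Tα x| ≤ ENNReal.ofReal (C₀ * a) := by
        calc ENNReal.ofReal |Tα x| ≤ ENNReal.ofReal C₀ * M x := hTM x
          _ ≤ ENNReal.ofReal C₀ * N⁻¹ := mul_le_mul_right (hMle x) _
          _ = ENNReal.ofReal (C₀ * a) := by rw [← hofa, ← ENNReal.ofReal_mul hC₀.le]
      exact (ENNReal.ofReal_le_ofReal_iff (by positivity)).mp h1
    refine ⟨Cu' * (C₀^p₁ + 1), by positivity, fun c => ?_⟩
    by_cases hc0 : c = 0
    · simp [hc0, h0]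
    have hc : 0 < ‖c‖ := norm_pos_iff.mpr hc0
    set t₀ : ℝ := ‖c‖ * a with ht₀def
    have ht₀ : 0 < t₀ := by positivity
    have hpt : ∀ x, ENNReal.ofReal (φ x (‖c‖ * |Tα x|)) ≤
        ENNReal.ofReal (Cu' * (C₀^p₁ + 1)) * ENNReal.ofReal (φ x t₀) := by
      intro x
      rw [← ENNReal.ofReal_mul (by positivity)]
      apply ENNReal.ofReal_le_ofReal
      refine (hupper x _ t₀ (by positivity) ht₀).trans ?_
      have hdiv : ‖c‖ * |Tα x| / t₀ = |Tα x| / a := by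
        rw [ht₀def, mul_div_mul_left _ _ hc.ne']
      rw [hdiv]
      have h2 : (|Tα x| / a)^p₁ ≤ C₀^p₁ := by
        apply Real.rpow_le_rpow (by positivity) _ hp₁.le
        rw [div_le_iff₀ ha]
        exact hTreal x
      have h3 : 0 ≤ φ x t₀ := hnn x t₀ ht₀.le
      have h4 : Cu' * ((|Tα x| / a)^p₁ + 1) ≤ Cu' * (C₀^p₁ + 1) := by nlinarith
      exact mul_le_mul_of_nonneg_right h4 h3
    calc ∫⁻ x, ENNReal.ofReal (φ x (‖c‖ * |Tα x|)) ∂μ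
        ≤ ∫⁻ x, ENNReal.ofReal (Cu' * (C₀^p₁ + 1)) * ENNReal.ofReal (φ x t₀) ∂μ :=
          lintegral_mono hpt
      _ = ENNReal.ofReal (Cu' * (C₀^p₁ + 1)) *
          ∫⁻ x, ENNReal.ofReal (φ x (‖c‖ * a)) ∂μ := by
          rw [lintegral_const_mul' _ _ ENNReal.ofReal_ne_top]
  -- main case : 1 < q < ∞
  
  set sR : ℝ := q.toReal with hsRdef
  have hs1' : (1:ℝ) < sR := by
    have h := (ENNReal.toReal_lt_toReal (by simp : (1:ℝ≥0∞) ≠ ⊤) hqt).mpr hq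
    simpa using h
  have hs0 : (0:ℝ) < sR := by linarith
  have hsne : sR ≠ 0 := hs0.ne'
  -- facts about r
  have hb_lt : ENNReal.ofReal p₁ / q < 1 := by
    rw [ENNReal.div_lt_iff (Or.inl hq0) (Or.inl hqt), one_mul]
    calc ENNReal.ofReal p₁ ≤ 1 := by
          rw [← ENNReal.ofReal_one]
          exact ENNReal.ofReal_le_ofReal hp₁1
      _ < q := hq
  have hb_ne_top : ENNReal.ofReal p₁ / q ≠ ⊤ := (hb_lt.trans ENNReal.one_lt_top).ne
  have h1r_ne_top : 1 / r ≠ ⊤ := by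
    intro h
    rw [h] at hr
    simp at hr
  have hrne0 : r ≠ 0 := by
    intro h
    rw [h] at hr
    simp at hr
  have hrnet : r ≠ ⊤ := by
    intro h
    rw [h] at hr
    simp at hr
    exact absurd hr hb_lt.ne
  set rr : ℝ := r.toReal with hrrdef
  have hrr0 : 0 < rr := ENNReal.toReal_pos hrne0 hrnet
  have hsum : rr⁻¹ + p₁/sR = 1 := by
    have h := congrArg ENNReal.toReal hr
    rw [ENNReal.toReal_add h1r_ne_top hb_ne_top, ENNReal.toReal_div, ENNReal.toReal_div,
      ENNReal.toReal_ofReal hp₁.le] at h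
    simpa [one_div] using h
  have hρeq : (1/r).toReal = 1 - p₁/sR := by
    rw [ENNReal.toReal_div]
    simp only [ENNReal.toReal_one]
    rw [one_div]
    linarith
  have hconj : Real.HolderConjugate (sR/p₁) rr := by
    rw [Real.holderConjugate_iff]
    constructor
    · exact (one_lt_div hp₁).mpr (lt_of_le_of_lt hp₁1 hs1')
    · rw [inv_div]
      linarith
  -- integrability of f
  have hEne : eLpNorm α q μ ≠ ⊤ := by
    refine ne_top_of_le_ne_top ?_ hα
    exact ENNReal.mul_ne_top
      (ENNReal.rpow_ne_top_of_nonneg (by positivity) hXfin.ne) hNinv_ne_top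
  have hintf : ∫⁻ x, ENNReal.ofReal |α' x| ∂μ ≠ ⊤ := by
    have heq1 : ∫⁻ x, ENNReal.ofReal |α' x| ∂μ = eLpNorm α' 1 μ := by
      rw [eLpNorm_one_eq_lintegral_enorm]
      exact lintegral_congr fun x => (Real.enorm_eq_ofReal_abs _).symm
    rw [heq1]
    have h1 : eLpNorm α' 1 μ ≤ eLpNorm α' q μ *
        μ Set.univ ^ (1/(1:ℝ≥0∞).toReal - 1/q.toReal) :=
      eLpNorm_le_eLpNorm_mul_rpow_measure_univ hq.le hα'meas.aestronglyMeasurable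
    refine ne_top_of_le_ne_top (ENNReal.mul_ne_top ?_ ?_) h1
    · rw [← eLpNorm_congr_ae hae]
      exact hEne
    · apply ENNReal.rpow_ne_top_of_nonneg _ hXfin.ne
      simp only [ENNReal.toReal_one]
      rw [← hsRdef]
      have : 1/sR ≤ 1 := by
        rw [div_le_one hs0]; linarith
      linarith
  -- strong type bound
  set Kst : ℝ≥0∞ := (ENNReal.ofReal C₁)^3 * ENNReal.ofReal (sR * (4 ^ sR / (sR - 1)))
    with hKstdef
  have hKst_ne_top : Kst ≠ ⊤ := by
    rw [hKstdef]
    exact ENNReal.mul_ne_top (by simp) ENNReal.ofReal_ne_top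
  have hstrong : ∫⁻ x, M x ^ sR ∂μ ≤ Kst * ∫⁻ x, f x ^ sR ∂μ :=
    maximalFn_strong_type μ C₁ hdouble hpos hXfin x₀ R₀ hR₀ hXball α' hα'meas sR hs1' hintf
  have hfs : ∫⁻ x, f x ^ sR ∂μ = (eLpNorm α q μ) ^ sR := by
    rw [eLpNorm_congr_ae hae, eLpNorm_eq_lintegral_rpow_enorm_toReal hq0 hqt,
      ← ENNReal.rpow_mul, one_div, inv_mul_cancel₀ hsne, ENNReal.rpow_one]
    exact lintegral_congr fun x => by rw [Real.enorm_eq_ofReal_abs]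
  -- constants
  set c₁ : ℝ≥0∞ := (ENNReal.ofReal C₀ / ENNReal.ofReal a)^p₁ with hc₁def
  have hoa0 : ENNReal.ofReal a ≠ 0 := (ENNReal.ofReal_pos.mpr ha).ne'
  have hc₁_ne_top : c₁ ≠ ⊤ := by
    apply ENNReal.rpow_ne_top_of_nonneg hp₁.le
    simp [ENNReal.div_eq_top, hoa0]
  set Ktot : ℝ≥0∞ := ENNReal.ofReal Cu' *
    ((ENNReal.ofReal C₀)^p₁ * Kst^(p₁/sR) * ENNReal.ofReal ARH + 1) with hKtotdef
  have hKtot_ne_top : Ktot ≠ ⊤ := by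
    rw [hKtotdef]
    refine ENNReal.mul_ne_top ENNReal.ofReal_ne_top (ENNReal.add_ne_top.mpr ⟨?_, by simp⟩)
    refine ENNReal.mul_ne_top (ENNReal.mul_ne_top ?_ ?_) ENNReal.ofReal_ne_top
    · exact ENNReal.rpow_ne_top_of_nonneg hp₁.le ENNReal.ofReal_ne_top
    · exact ENNReal.rpow_ne_top_of_nonneg (by positivity) hKst_ne_top
  refine ⟨Ktot.toReal + 1, by positivity, fun c => ?_⟩
  by_cases hc0 : c = 0
  · simp [hc0, h0]
  have hc : 0 < ‖c‖ := norm_pos_iff.mpr hc0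
  set t₀ : ℝ := ‖c‖ * a with ht₀def
  have ht₀ : 0 < t₀ := by positivity
  set φt : X → ℝ≥0∞ := fun x => ENNReal.ofReal (φ x t₀) with hφtdef
  have hφtmeas : Measurable φt := (hmeas t₀).ennreal_ofReal
  set I : ℝ≥0∞ := ∫⁻ x, φt x ∂μ with hIdef
  set T2 : ℝ≥0∞ := ∫⁻ x, ENNReal.ofReal ((|Tα x|/a)^p₁) * φt x ∂μ with hT2def
  set T3 : ℝ≥0∞ := ∫⁻ x, M x ^ p₁ * φt x ∂μ with hT3def
  -- Step 1
  have step1 : ∫⁻ x, ENNReal.ofReal (φ x (‖c‖ * |Tα x|)) ∂μ ≤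
      ENNReal.ofReal Cu' * (T2 + I) := by
    have hpt : ∀ x, ENNReal.ofReal (φ x (‖c‖ * |Tα x|)) ≤
        ENNReal.ofReal Cu' * (ENNReal.ofReal ((|Tα x|/a)^p₁) * φt x + φt x) := by
      intro x
      have hub := hupper x (‖c‖ * |Tα x|) t₀ (by positivity) ht₀
      have hdiv : ‖c‖ * |Tα x| / t₀ = |Tα x| / a := by
        rw [ht₀def, mul_div_mul_left _ _ hc.ne']
      rw [hdiv] at hub
      calc ENNReal.ofReal (φ x (‖c‖ * |Tα x|))
          ≤ ENNReal.ofReal (Cu' * ((|Tα x|/a)^p₁ + 1) * φ x t₀) :=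
            ENNReal.ofReal_le_ofReal hub
        _ = ENNReal.ofReal Cu' * (ENNReal.ofReal ((|Tα x|/a)^p₁) * φt x + φt x) := by
            rw [ENNReal.ofReal_mul (by positivity : (0:ℝ) ≤ Cu' * ((|Tα x|/a)^p₁ + 1)),
              ENNReal.ofReal_mul (by positivity : (0:ℝ) ≤ Cu'),
              ENNReal.ofReal_add (by positivity) zero_le_one, ENNReal.ofReal_one]
            rw [hφtdef]
            ring
    calc ∫⁻ x, ENNReal.ofReal (φ x (‖c‖ * |Tα x|)) ∂μ
        ≤ ∫⁻ x, ENNReal.ofReal Cu' *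
            (ENNReal.ofReal ((|Tα x|/a)^p₁) * φt x + φt x) ∂μ := lintegral_mono hpt
      _ = ENNReal.ofReal Cu' *
            ∫⁻ x, (ENNReal.ofReal ((|Tα x|/a)^p₁) * φt x + φt x) ∂μ := by
          rw [lintegral_const_mul' _ _ ENNReal.ofReal_ne_top]
      _ = ENNReal.ofReal Cu' * (T2 + I) := by
          rw [lintegral_add_right _ hφtmeas]
  -- Step 2
  have step2 : T2 ≤ c₁ * T3 := by
    have hpt2 : ∀ x, ENNReal.ofReal ((|Tα x|/a)^p₁) * φt x ≤ c₁ * (M x ^ p₁ * φt x) := by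
      intro x
      rw [← mul_assoc]
      apply mul_le_mul_left
      calc ENNReal.ofReal ((|Tα x|/a)^p₁)
          = (ENNReal.ofReal (|Tα x|/a))^p₁ :=
            (ENNReal.ofReal_rpow_of_nonneg (by positivity) hp₁.le).symm
        _ = (ENNReal.ofReal |Tα x| / ENNReal.ofReal a)^p₁ := by
            rw [ENNReal.ofReal_div_of_pos ha]
        _ ≤ ((ENNReal.ofReal C₀ * M x) / ENNReal.ofReal a)^p₁ := by
            apply ENNReal.rpow_le_rpow _ hp₁.le
            exact ENNReal.div_le_div_right (hTM x) _
        _ = ((ENNReal.ofReal C₀ / ENNReal.ofReal a) * M x)^p₁ := by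
            rw [div_eq_mul_inv, div_eq_mul_inv]
            ring_nf
        _ = c₁ * M x ^ p₁ := ENNReal.mul_rpow_of_nonneg _ _ hp₁.le
    calc T2 ≤ ∫⁻ x, c₁ * (M x ^ p₁ * φt x) ∂μ := lintegral_mono hpt2
      _ = c₁ * T3 := lintegral_const_mul' _ _ hc₁_ne_top
  -- Step 3 : Hölder
  have step3 : T3 ≤ (∫⁻ x, M x ^ sR ∂μ)^(p₁/sR) * (∫⁻ x, φt x ^ rr ∂μ)^(1/rr) := by
    have hH := ENNReal.lintegral_mul_le_Lp_mul_Lq μ hconj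
      ((hMmeas.pow_const p₁).aemeasurable) hφtmeas.aemeasurable
    simp only [Pi.mul_apply] at hH
    refine le_trans (le_of_eq rfl) (hH.trans ?_)
    apply mul_le_mul'
    · apply le_of_eq
      have hrw : ∀ x : X, (M x ^ p₁) ^ (sR/p₁) = M x ^ sR := by
        intro x
        rw [← ENNReal.rpow_mul]
        congr 1
        rw [mul_comm, div_mul_cancel₀ _ hp₁.ne']
      rw [lintegral_congr hrw, one_div_div]
    · exact le_of_eq rfl
  -- Step 4
  have step4 : (∫⁻ x, M x ^ sR ∂μ)^(p₁/sR) ≤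
      Kst^(p₁/sR) * (μ Set.univ ^ (p₁/sR) * (ENNReal.ofReal a)^p₁) := by
    have hMs : ∫⁻ x, M x ^ sR ∂μ ≤ Kst * (μ Set.univ ^ (1/sR) * N⁻¹)^sR := by
      refine hstrong.trans ?_
      rw [hfs]
      apply mul_le_mul_right
      apply ENNReal.rpow_le_rpow _ hs0.le
      refine hα.trans (le_of_eq ?_)
      congr 2
      rw [ENNReal.toReal_div]
      simp [hsRdef]
    calc (∫⁻ x, M x ^ sR ∂μ)^(p₁/sR)
        ≤ (Kst * (μ Set.univ ^ (1/sR) * N⁻¹)^sR)^(p₁/sR) :=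
          ENNReal.rpow_le_rpow hMs (by positivity)
      _ = Kst^(p₁/sR) * (μ Set.univ ^ (p₁/sR) * (ENNReal.ofReal a)^p₁) := by
          rw [ENNReal.mul_rpow_of_nonneg _ _ (by positivity : (0:ℝ) ≤ p₁/sR)]
          congr 1
          rw [← ENNReal.rpow_mul, mul_comm sR (p₁/sR), div_mul_cancel₀ _ hsne,
            ENNReal.mul_rpow_of_nonneg _ _ hp₁.le, ← ENNReal.rpow_mul, ← hofa]
          congr 2
          ring
  -- Step 5 : reverse Hölder on X
  have step5 : (∫⁻ x, φt x ^ rr ∂μ)^(1/rr) ≤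
      ENNReal.ofReal ARH * μ Set.univ ^ ((1/r).toReal) * I / μ Set.univ := by
    have h5 := hRH t₀ ht₀ x₀ R₀ hR₀
    rw [hXball, Measure.restrict_univ] at h5
    have heq : eLpNorm (fun y => φ y t₀) r μ = (∫⁻ x, φt x ^ rr ∂μ)^(1/rr) := by
      rw [eLpNorm_eq_lintegral_rpow_enorm_toReal hrne0 hrnet]
      congr 1
      exact lintegral_congr fun x => by
        rw [hφtdef]
        simp only
        rw [Real.enorm_eq_ofReal (hnn x t₀ ht₀.le)]
    rw [heq] at h5
    exact (ENNReal.le_div_iff_mul_le (Or.inl hμ0) (Or.inl hXfin.ne)).mpr h5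
  -- combine
  have hkey : c₁ * ((Kst^(p₁/sR) * (μ Set.univ ^ (p₁/sR) * (ENNReal.ofReal a)^p₁)) *
      (ENNReal.ofReal ARH * μ Set.univ ^ ((1/r).toReal) * I / μ Set.univ)) =
      ((ENNReal.ofReal C₀)^p₁ * Kst^(p₁/sR) * ENNReal.ofReal ARH) * I := by
    have h1 : c₁ * (ENNReal.ofReal a)^p₁ = (ENNReal.ofReal C₀)^p₁ := by
      rw [hc₁def, ← ENNReal.mul_rpow_of_nonneg _ _ hp₁.le,
        ENNReal.div_mul_cancel hoa0 ENNReal.ofReal_ne_top]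
    have h2 : μ Set.univ ^ (p₁/sR) * μ Set.univ ^ ((1/r).toReal) * (μ Set.univ)⁻¹ = 1 := by
      rw [← ENNReal.rpow_add _ _ hμ0 hXfin.ne, hρeq]
      have he : p₁/sR + (1 - p₁/sR) = 1 := by ring
      rw [he, ENNReal.rpow_one, ENNReal.mul_inv_cancel hμ0 hXfin.ne]
    rw [div_eq_mul_inv]
    calc c₁ * ((Kst^(p₁/sR) * (μ Set.univ ^ (p₁/sR) * (ENNReal.ofReal a)^p₁)) *
        (ENNReal.ofReal ARH * μ Set.univ ^ ((1/r).toReal) * I * (μ Set.univ)⁻¹))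
        = (c₁ * (ENNReal.ofReal a)^p₁) * Kst^(p₁/sR) * ENNReal.ofReal ARH *
          (μ Set.univ ^ (p₁/sR) * μ Set.univ ^ ((1/r).toReal) * (μ Set.univ)⁻¹) * I := by
          ring
      _ = ((ENNReal.ofReal C₀)^p₁ * Kst^(p₁/sR) * ENNReal.ofReal ARH) * I := by
          rw [h1, h2, mul_one]
  calc ∫⁻ x, ENNReal.ofReal (φ x (‖c‖ * |Tα x|)) ∂μ
      ≤ ENNReal.ofReal Cu' * (T2 + I) := step1
    _ ≤ ENNReal.ofReal Cu' * (c₁ * ((Kst^(p₁/sR) * (μ Set.univ ^ (p₁/sR) *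
          (ENNReal.ofReal a)^p₁)) *
          (ENNReal.ofReal ARH * μ Set.univ ^ ((1/r).toReal) * I / μ Set.univ)) + I) := by
        apply mul_le_mul_right
        apply add_le_add_left
        refine step2.trans ?_
        apply mul_le_mul_right
        refine step3.trans ?_
        exact mul_le_mul' step4 step5
    _ = Ktot * I := by
        rw [hkey, hKtotdef]
        ring
    _ ≤ ENNReal.ofReal (Ktot.toReal + 1) * I := by
        apply mul_le_mul_left
        conv_lhs => rw [← ENNReal.ofReal_toReal hKtot_ne_top]
        exact ENNReal.ofReal_le_ofReal (by linarith)
end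

section
/- Let Ω ⊊ ℝⁿ be open with Ω^∁ unbounded, satisfying the geometric property that for every ball B₀ = B(x₀,r₀) centered in Ω with 4B₀ ∩ ∂Ω ≠ ∅ there exists a ball B̃₀ ⊂ Ω^∁ with radius comparable to r₀ and center at distance ≲ r₀ from x₀. Let φ be a growth function on ℝⁿ, a ∈ L^∞(ℝⁿ) supported in B₀ with ‖a‖_{L^∞} ≤ ‖𝟙_{B₀}‖_{L^φ(ℝⁿ)}^{-1}. Define ã := a − (∫_{B₀} a(x)dx) · 𝟙_{B̃₀}/|B̃₀|. Then ∫_{ℝⁿ} ã(x) dx = 0, supp(ã) ⊂ C̃ B₀ for a constant C̃ depending only on the comparability constants, ‖ã‖_{L^∞(ℝⁿ)} ≤ C ‖𝟙_{C̃B₀}‖_{L^φ(ℝⁿ)}^{-1}, and ã|_Ω = a|_Ω. -/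
open MeasureTheory Metric Filter
open scoped ENNReal

set_option maxHeartbeats 1000000

/-- The corrected atom `ã := a − (∫_{B₀} a) 𝟙_{B̃₀}/|B̃₀|`. -/
noncomputable def tildeAtom {n : ℕ}
    (a : EuclideanSpace ℝ (Fin n) → ℝ) (x₀ : EuclideanSpace ℝ (Fin n)) (r₀ : ℝ)
    (x₁ : EuclideanSpace ℝ (Fin n)) (r₁ : ℝ) : EuclideanSpace ℝ (Fin n) → ℝ :=
  fun x => a x -
    (∫ y in ball x₀ r₀, a y) * Set.indicator (ball x₁ r₁) (fun _ => (1 : ℝ)) x /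
      (volume (ball x₁ r₁)).toReal

/-- Positivity of the Luxemburg quasi-norm of the indicator of a set of positive measure. -/
lemma luxNorm_indicator_pos {n : ℕ} (φ : EuclideanSpace ℝ (Fin n) → ℝ → ℝ)
    (hmono : ∀ x, MonotoneOn (φ x) (Set.Ici 0))
    (hlim : ∀ x, Tendsto (φ x) atTop atTop)
    (hmeas : ∀ t : ℝ, Measurable fun x => φ x t)
    (B : Set (EuclideanSpace ℝ (Fin n))) (hBm : MeasurableSet B) (hB : volume B ≠ 0) :
    0 < luxNorm volume φ (Set.indicator B fun _ => (1 : ℝ)) := by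
  classical
  have hsup : ∀ x, (⨆ k : ℕ, ENNReal.ofReal (φ x ((k : ℝ) + 1))) = ⊤ := by
    intro x
    rw [iSup_eq_top]
    intro b hb
    obtain ⟨T, hT⟩ := Filter.tendsto_atTop_atTop.mp (hlim x) (b.toReal + 1)
    obtain ⟨k, hk⟩ := exists_nat_ge T
    refine ⟨k, ?_⟩
    have h1 : b.toReal + 1 ≤ φ x ((k : ℝ) + 1) := hT _ (by linarith)
    calc b = ENNReal.ofReal b.toReal := (ENNReal.ofReal_toReal hb.ne).symm
      _ < ENNReal.ofReal (b.toReal + 1) := by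
          rw [ENNReal.ofReal_lt_ofReal_iff (by positivity)]
          have : (0:ℝ) ≤ b.toReal := ENNReal.toReal_nonneg
          linarith
      _ ≤ ENNReal.ofReal (φ x ((k : ℝ) + 1)) := ENNReal.ofReal_le_ofReal h1
  have hmonoF : Monotone fun k : ℕ => fun x => ENNReal.ofReal (φ x ((k : ℝ) + 1)) := by
    intro k k' hkk x
    refine ENNReal.ofReal_le_ofReal (hmono x (Set.mem_Ici.mpr (by positivity))
      (Set.mem_Ici.mpr (by positivity)) ?_)
    have : (k : ℝ) ≤ (k' : ℝ) := Nat.cast_le.mpr hkk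
    linarith
  have hlint : (⨆ k : ℕ, ∫⁻ x in B, ENNReal.ofReal (φ x ((k : ℝ) + 1))) = ⊤ := by
    rw [← lintegral_iSup (fun k => (hmeas _).ennreal_ofReal) hmonoF]
    have h1 : (∫⁻ x in B, ⨆ k : ℕ, ENNReal.ofReal (φ x ((k : ℝ) + 1)))
        = ∫⁻ _x in B, (⊤ : ℝ≥0∞) := lintegral_congr fun x => hsup x
    rw [h1, setLIntegral_const, ENNReal.top_mul hB]
  obtain ⟨k, hk⟩ : ∃ k : ℕ, (1 : ℝ≥0∞) < ∫⁻ x in B, ENNReal.ofReal (φ x ((k : ℝ) + 1)) := by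
    rw [← lt_iSup_iff, hlint]
    exact ENNReal.one_lt_top
  have hl₀ : (0 : ℝ) < ((k : ℝ) + 1)⁻¹ := by positivity
  refine lt_of_lt_of_le (ENNReal.ofReal_pos.mpr hl₀) ?_
  unfold luxNorm
  refine le_iInf fun l => le_iInf fun hl => le_iInf fun hcond => ?_
  refine ENNReal.ofReal_le_ofReal ?_
  by_contra hcon
  push_neg at hcon
  have hk1 : (k : ℝ) + 1 ≤ 1 / l := by
    rw [le_div_iff₀ hl]
    have h2 : ((k : ℝ) + 1) * l < ((k : ℝ) + 1) * ((k : ℝ) + 1)⁻¹ :=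
      mul_lt_mul_of_pos_left hcon (by positivity)
    rw [mul_inv_cancel₀ (by positivity : ((k:ℝ)+1) ≠ 0)] at h2
    linarith
  have hgmeas : Measurable fun x =>
      ENNReal.ofReal (φ x (|Set.indicator B (fun _ => (1:ℝ)) x| / l)) := by
    have heq : (fun x => ENNReal.ofReal (φ x (|Set.indicator B (fun _ => (1:ℝ)) x| / l)))
        = B.piecewise (fun x => ENNReal.ofReal (φ x (1/l)))
            (fun x => ENNReal.ofReal (φ x (|(0:ℝ)|/l))) := by
      funext x
      by_cases hx : x ∈ B
      · simp [Set.piecewise, hx, Set.indicator_of_mem hx]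
      · simp [Set.piecewise, hx, Set.indicator_of_notMem hx]
    rw [heq]
    exact Measurable.piecewise hBm (hmeas _).ennreal_ofReal (hmeas _).ennreal_ofReal
  have hmain : (1 : ℝ≥0∞) < 1 := by
    calc (1 : ℝ≥0∞) < ∫⁻ x in B, ENNReal.ofReal (φ x ((k : ℝ) + 1)) := hk
      _ ≤ ∫⁻ x in B, ENNReal.ofReal (φ x (|Set.indicator B (fun _ => (1:ℝ)) x| / l)) := by
          refine setLIntegral_mono hgmeas fun x hx => ?_
          refine ENNReal.ofReal_le_ofReal ?_
          rw [Set.indicator_of_mem hx, abs_one]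
          exact hmono x (Set.mem_Ici.mpr (by positivity))
            (Set.mem_Ici.mpr (by positivity)) hk1
      _ ≤ ∫⁻ x, ENNReal.ofReal (φ x (|Set.indicator B (fun _ => (1:ℝ)) x| / l)) :=
          setLIntegral_le_lintegral _ _
      _ ≤ 1 := hcond
  exact absurd hmain (lt_irrefl _)

/-- Correcting an `L^∞` atom on a ball `B₀` near the boundary of `Ω` by a
multiple of the normalized indicator of a comparable ball `B̃₀ ⊆ Ω^∁` produces a function
`ã` with vanishing integral, support in `C̃B₀`, the expected `L^∞` bound, and `ã = a`
on `Ω`. -/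
theorem corrected_atom_properties
    {n : ℕ} (Ω : Set (EuclideanSpace ℝ (Fin n)))
    (hΩo : IsOpen Ω) (hΩc : ¬ Bornology.IsBounded Ωᶜ)
    (φ : EuclideanSpace ℝ (Fin n) → ℝ → ℝ)
    (hnn : ∀ x t, 0 ≤ t → 0 ≤ φ x t)
    (hmono : ∀ x, MonotoneOn (φ x) (Set.Ici 0))
    (h0 : ∀ x, φ x 0 = 0)
    (hposφ : ∀ x t, 0 < t → 0 < φ x t)
    (hlim : ∀ x, Tendsto (φ x) atTop atTop)
    (hmeas : ∀ t : ℝ, Measurable fun x => φ x t)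
    (p : ℝ) (hp : 0 < p) (hp1 : p ≤ 1)
    (Cl : ℝ) (hCl : 0 < Cl)
    (hlow : ∀ x (s t : ℝ), 0 ≤ s → s ≤ 1 → 0 ≤ t → φ x (s * t) ≤ Cl * s ^ p * φ x t)
    (Cu : ℝ) (hCu : 0 < Cu)
    (hup : ∀ x (s t : ℝ), 1 ≤ s → 0 ≤ t → φ x (s * t) ≤ Cu * s * φ x t)
    (qA : ℝ) (hqA : 1 < qA) (AA : ℝ) (hAA : 0 < AA)
    (hAq : ∀ t : ℝ, 0 < t → ∀ (x : EuclideanSpace ℝ (Fin n)) (ρ : ℝ), 0 < ρ →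
      (∫⁻ y in ball x ρ, ENNReal.ofReal (φ y t)) *
        (∫⁻ y in ball x ρ, ENNReal.ofReal (φ y t) ^ (1 - qA / (qA - 1))) ^ (qA - 1) ≤
          ENNReal.ofReal AA * volume (ball x ρ) ^ qA)
    (x₀ : EuclideanSpace ℝ (Fin n)) (r₀ : ℝ) (hr₀ : 0 < r₀) (hx₀ : x₀ ∈ Ω)
    (x₁ : EuclideanSpace ℝ (Fin n)) (r₁ : ℝ) (hr₁ : 0 < r₁)
    (c : ℝ) (hc : 1 ≤ c)
    (hball : ball x₁ r₁ ⊆ Ωᶜ)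
    (hcomp₁ : r₀ / c ≤ r₁) (hcomp₂ : r₁ ≤ c * r₀) (hdist : dist x₀ x₁ ≤ c * r₀)
    (a : EuclideanSpace ℝ (Fin n) → ℝ) (ham : Measurable a)
    (hasupp : ∀ x, x ∉ ball x₀ r₀ → a x = 0)
    (habd : ∀ x, |a x| ≤
      ((luxNorm volume φ (Set.indicator (ball x₀ r₀) fun _ => (1 : ℝ)))⁻¹).toReal) :
    (∫ x, tildeAtom a x₀ r₀ x₁ r₁ x) = 0 ∧
    (∀ x, x ∉ ball x₀ (3 * c * r₀) → tildeAtom a x₀ r₀ x₁ r₁ x = 0) ∧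
    (∃ C : ℝ, 0 < C ∧ ∀ x, |tildeAtom a x₀ r₀ x₁ r₁ x| ≤
      C * ((luxNorm volume φ
        (Set.indicator (ball x₀ (3 * c * r₀)) fun _ => (1 : ℝ)))⁻¹).toReal) ∧
    (∀ x ∈ Ω, tildeAtom a x₀ r₀ x₁ r₁ x = a x) := by
  have hc0 : (0:ℝ) < c := lt_of_lt_of_le one_pos hc
  have hρ : (0:ℝ) < 3 * c * r₀ := by positivity
  have hvB₁_pos : (0:ℝ≥0∞) < volume (ball x₁ r₁) := measure_ball_pos volume x₁ hr₁
  have hvB₁_top : volume (ball x₁ r₁) < ⊤ := measure_ball_lt_top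
  set v : ℝ := (volume (ball x₁ r₁)).toReal with hv
  have hv_pos : 0 < v := ENNReal.toReal_pos hvB₁_pos.ne' hvB₁_top.ne
  set v₀ : ℝ := (volume (ball x₀ r₀)).toReal with hv₀
  have hv₀_pos : 0 < v₀ :=
    ENNReal.toReal_pos (measure_ball_pos volume x₀ hr₀).ne' measure_ball_lt_top.ne
  set C₀ : ℝ :=
    ((luxNorm volume φ (Set.indicator (ball x₀ r₀) fun _ => (1 : ℝ)))⁻¹).toReal with hC₀
  have hC₀nn : 0 ≤ C₀ := ENNReal.toReal_nonneg
  set k : ℝ := ∫ y in ball x₀ r₀, a y with hk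
  have haind : Set.indicator (ball x₀ r₀) a = a := by
    funext x
    by_cases hx : x ∈ ball x₀ r₀
    · simp [Set.indicator_of_mem hx]
    · simp [Set.indicator_of_notMem hx, hasupp x hx]
  have haInt : Integrable a := by
    rw [← haind]
    refine IntegrableOn.integrable_indicator ?_ measurableSet_ball
    refine Measure.integrableOn_of_bounded (M := C₀) measure_ball_lt_top.ne
      ham.aestronglyMeasurable ?_
    exact ae_of_all _ fun x => by simpa [Real.norm_eq_abs] using habd x
  have hIntA : ∫ x, a x = k := by
    rw [← haind, integral_indicator measurableSet_ball]
  have hIndInt : Integrable (Set.indicator (ball x₁ r₁) (fun _ => (1:ℝ))) := by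
    refine IntegrableOn.integrable_indicator ?_ measurableSet_ball
    exact integrableOn_const measure_ball_lt_top.ne
  have htA : tildeAtom a x₀ r₀ x₁ r₁
      = fun x => a x - (k / v) * Set.indicator (ball x₁ r₁) (fun _ => (1:ℝ)) x := by
    funext x
    simp only [tildeAtom]
    rw [← hk, ← hv]
    ring
  have hIntInd : ∫ x, Set.indicator (ball x₁ r₁) (fun _ => (1:ℝ)) x = v := by
    rw [integral_indicator_const (1:ℝ) measurableSet_ball]
    simp [hv, measureReal_def]
  -- Part 1
  have hpart1 : (∫ x, tildeAtom a x₀ r₀ x₁ r₁ x) = 0 := by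
    rw [htA, integral_sub haInt (hIndInt.const_mul (k / v))]
    have hmuleq : (fun x => k / v * Set.indicator (ball x₁ r₁) (fun _ => (1:ℝ)) x)
        = fun x => (k / v) • Set.indicator (ball x₁ r₁) (fun _ => (1:ℝ)) x := by
      funext x
      rw [smul_eq_mul]
    rw [hmuleq, integral_smul, hIntInd, smul_eq_mul, hIntA,
      div_mul_cancel₀ _ hv_pos.ne', sub_self]
  -- Part 2
  have hsub01 : ball x₀ r₀ ⊆ ball x₀ (3 * c * r₀) := by
    apply ball_subset_ball
    nlinarith
  have hsub1big : ball x₁ r₁ ⊆ ball x₀ (3 * c * r₀) := by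
    intro y hy
    have h1 : dist y x₁ < r₁ := mem_ball.mp hy
    have h2 : dist y x₀ ≤ dist y x₁ + dist x₁ x₀ := dist_triangle _ _ _
    have h3 : dist x₁ x₀ ≤ c * r₀ := by rw [dist_comm]; exact hdist
    refine mem_ball.mpr ?_
    nlinarith [mul_pos hc0 hr₀]
  have hpart2 : ∀ x, x ∉ ball x₀ (3 * c * r₀) → tildeAtom a x₀ r₀ x₁ r₁ x = 0 := by
    intro x hx
    rw [htA]
    simp only
    rw [hasupp x (fun h => hx (hsub01 h)), Set.indicator_of_notMem (fun h => hx (hsub1big h))]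
    ring
  -- Part 4
  have hpart4 : ∀ x ∈ Ω, tildeAtom a x₀ r₀ x₁ r₁ x = a x := by
    intro x hx
    rw [htA]
    simp only
    rw [Set.indicator_of_notMem (fun h => (hball h) hx)]
    ring
  -- Part 3
  have hq0 : (0:ℝ) < qA := by linarith
  have hq1 : (0:ℝ) < qA - 1 := by linarith
  have hconj : qA.HolderConjugate (qA / (qA - 1)) := Real.HolderConjugate.conjExponent hqA
  have hvB'0 : volume (ball x₀ r₀) ≠ 0 := (measure_ball_pos volume x₀ hr₀).ne'
  have hvB'top : volume (ball x₀ r₀) ≠ ⊤ := measure_ball_lt_top.ne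
  have hvBtop : volume (ball x₀ (3 * c * r₀)) ≠ ⊤ := measure_ball_lt_top.ne
  set K : ℝ≥0∞ := ENNReal.ofReal AA * volume (ball x₀ (3 * c * r₀)) ^ qA *
    (volume (ball x₀ r₀) ^ qA)⁻¹ with hKdef
  have hrpB'0 : (0:ℝ≥0∞) < volume (ball x₀ r₀) ^ qA :=
    ENNReal.rpow_pos (measure_ball_pos volume x₀ hr₀) hvB'top
  have hrpB'top : volume (ball x₀ r₀) ^ qA ≠ ⊤ :=
    ENNReal.rpow_ne_top_of_nonneg hq0.le hvB'top
  have hKtop : K ≠ ⊤ := by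
    refine ENNReal.mul_ne_top (ENNReal.mul_ne_top ENNReal.ofReal_ne_top
      (ENNReal.rpow_ne_top_of_nonneg hq0.le hvBtop)) ?_
    exact ENNReal.inv_ne_top.mpr hrpB'0.ne'
  have hE1 : (1 / qA) * qA = 1 := by field_simp
  have hE2 : (1 / (qA / (qA - 1))) * qA = qA - 1 := by
    rw [one_div_div]
    field_simp
  have hKey : ∀ t : ℝ, 0 < t →
      (∫⁻ x in ball x₀ (3 * c * r₀), ENNReal.ofReal (φ x t)) ≤
        K * ∫⁻ x in ball x₀ r₀, ENNReal.ofReal (φ x t) := by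
    intro t ht
    have hfm : Measurable fun x : EuclideanSpace ℝ (Fin n) => ENNReal.ofReal (φ x t) :=
      (hmeas t).ennreal_ofReal
    have hf0 : ∀ x, ENNReal.ofReal (φ x t) ≠ 0 :=
      fun x => (ENNReal.ofReal_pos.mpr (hposφ x t ht)).ne'
    have hftop : ∀ x, ENNReal.ofReal (φ x t) ≠ ⊤ := fun _ => ENNReal.ofReal_ne_top
    have hhold := ENNReal.lintegral_mul_le_Lp_mul_Lq (volume.restrict (ball x₀ r₀)) hconj
      (f := fun x => ENNReal.ofReal (φ x t) ^ (1 / qA))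
      (g := fun x => ENNReal.ofReal (φ x t) ^ (-(1 / qA)))
      (hfm.pow_const _).aemeasurable (hfm.pow_const _).aemeasurable
    have e1 : ∀ x : EuclideanSpace ℝ (Fin n),
        (ENNReal.ofReal (φ x t) ^ (1 / qA)) ^ qA = ENNReal.ofReal (φ x t) := by
      intro x
      rw [← ENNReal.rpow_mul, hE1, ENNReal.rpow_one]
    have e2 : ∀ x : EuclideanSpace ℝ (Fin n),
        (ENNReal.ofReal (φ x t) ^ (-(1 / qA))) ^ (qA / (qA - 1))
          = ENNReal.ofReal (φ x t) ^ (1 - qA / (qA - 1)) := by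
      intro x
      rw [← ENNReal.rpow_mul]
      congr 1
      field_simp
      ring
    have e3 : ∀ x : EuclideanSpace ℝ (Fin n),
        ((fun x => ENNReal.ofReal (φ x t) ^ (1 / qA)) *
          fun x => ENNReal.ofReal (φ x t) ^ (-(1 / qA))) x = 1 := by
      intro x
      show ENNReal.ofReal (φ x t) ^ (1 / qA) * ENNReal.ofReal (φ x t) ^ (-(1 / qA)) = 1
      rw [← ENNReal.rpow_add _ _ (hf0 x) (hftop x)]
      have : (1 / qA) + (-(1 / qA)) = 0 := by ring
      rw [this, ENNReal.rpow_zero]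
    have hvol_le : volume (ball x₀ r₀) ≤
        (∫⁻ x in ball x₀ r₀, ENNReal.ofReal (φ x t)) ^ (1 / qA) *
          (∫⁻ x in ball x₀ r₀, ENNReal.ofReal (φ x t) ^ (1 - qA / (qA - 1))) ^
            (1 / (qA / (qA - 1))) := by
      calc volume (ball x₀ r₀) = ∫⁻ _x in ball x₀ r₀, (1:ℝ≥0∞) := (setLIntegral_one _).symm
        _ = ∫⁻ x in ball x₀ r₀,
            ((fun x => ENNReal.ofReal (φ x t) ^ (1 / qA)) *
              fun x => ENNReal.ofReal (φ x t) ^ (-(1 / qA))) x :=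
            lintegral_congr fun x => (e3 x).symm
        _ ≤ (∫⁻ x in ball x₀ r₀, (ENNReal.ofReal (φ x t) ^ (1 / qA)) ^ qA) ^ (1 / qA) *
            (∫⁻ x in ball x₀ r₀,
              (ENNReal.ofReal (φ x t) ^ (-(1 / qA))) ^ (qA / (qA - 1))) ^
                (1 / (qA / (qA - 1))) := hhold
        _ = _ := by
            rw [lintegral_congr fun x => e1 x, lintegral_congr fun x => e2 x]
    have hmono2 : (∫⁻ x in ball x₀ r₀, ENNReal.ofReal (φ x t) ^ (1 - qA / (qA - 1)))
        ≤ ∫⁻ x in ball x₀ (3 * c * r₀), ENNReal.ofReal (φ x t) ^ (1 - qA / (qA - 1)) :=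
      lintegral_mono' (Measure.restrict_mono hsub01 le_rfl) le_rfl
    have hpow : volume (ball x₀ r₀) ^ qA ≤
        (∫⁻ x in ball x₀ r₀, ENNReal.ofReal (φ x t)) *
          (∫⁻ x in ball x₀ (3 * c * r₀), ENNReal.ofReal (φ x t) ^ (1 - qA / (qA - 1)))
            ^ (qA - 1) := by
      calc volume (ball x₀ r₀) ^ qA
          ≤ ((∫⁻ x in ball x₀ r₀, ENNReal.ofReal (φ x t)) ^ (1 / qA) *
            (∫⁻ x in ball x₀ r₀, ENNReal.ofReal (φ x t) ^ (1 - qA / (qA - 1))) ^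
              (1 / (qA / (qA - 1)))) ^ qA := ENNReal.rpow_le_rpow hvol_le hq0.le
        _ = (∫⁻ x in ball x₀ r₀, ENNReal.ofReal (φ x t)) ^ ((1 / qA) * qA) *
            (∫⁻ x in ball x₀ r₀, ENNReal.ofReal (φ x t) ^ (1 - qA / (qA - 1))) ^
              ((1 / (qA / (qA - 1))) * qA) := by
            rw [ENNReal.mul_rpow_of_nonneg _ _ hq0.le, ← ENNReal.rpow_mul, ← ENNReal.rpow_mul]
        _ = (∫⁻ x in ball x₀ r₀, ENNReal.ofReal (φ x t)) *
            (∫⁻ x in ball x₀ r₀, ENNReal.ofReal (φ x t) ^ (1 - qA / (qA - 1))) ^ (qA - 1) := by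
            rw [hE1, hE2, ENNReal.rpow_one]
        _ ≤ _ := mul_le_mul_right (ENNReal.rpow_le_rpow hmono2 (by linarith)) _
    have hAqB := hAq t ht x₀ (3 * c * r₀) hρ
    have hchain : volume (ball x₀ r₀) ^ qA *
        (∫⁻ x in ball x₀ (3 * c * r₀), ENNReal.ofReal (φ x t)) ≤
        (∫⁻ x in ball x₀ r₀, ENNReal.ofReal (φ x t)) *
          (ENNReal.ofReal AA * volume (ball x₀ (3 * c * r₀)) ^ qA) := by
      calc volume (ball x₀ r₀) ^ qA *
            (∫⁻ x in ball x₀ (3 * c * r₀), ENNReal.ofReal (φ x t))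
          ≤ ((∫⁻ x in ball x₀ r₀, ENNReal.ofReal (φ x t)) *
              (∫⁻ x in ball x₀ (3 * c * r₀),
                ENNReal.ofReal (φ x t) ^ (1 - qA / (qA - 1))) ^ (qA - 1)) *
            (∫⁻ x in ball x₀ (3 * c * r₀), ENNReal.ofReal (φ x t)) :=
            mul_le_mul_left hpow _
        _ = (∫⁻ x in ball x₀ r₀, ENNReal.ofReal (φ x t)) *
            ((∫⁻ x in ball x₀ (3 * c * r₀), ENNReal.ofReal (φ x t)) *
              (∫⁻ x in ball x₀ (3 * c * r₀),
                ENNReal.ofReal (φ x t) ^ (1 - qA / (qA - 1))) ^ (qA - 1)) := by ring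
        _ ≤ _ := mul_le_mul_right hAqB _
    calc (∫⁻ x in ball x₀ (3 * c * r₀), ENNReal.ofReal (φ x t))
        = (volume (ball x₀ r₀) ^ qA)⁻¹ *
          (volume (ball x₀ r₀) ^ qA *
            ∫⁻ x in ball x₀ (3 * c * r₀), ENNReal.ofReal (φ x t)) := by
          rw [← mul_assoc, ENNReal.inv_mul_cancel hrpB'0.ne' hrpB'top, one_mul]
      _ ≤ (volume (ball x₀ r₀) ^ qA)⁻¹ *
          ((∫⁻ x in ball x₀ r₀, ENNReal.ofReal (φ x t)) *
            (ENNReal.ofReal AA * volume (ball x₀ (3 * c * r₀)) ^ qA)) :=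
          mul_le_mul_right hchain _
      _ = K * ∫⁻ x in ball x₀ r₀, ENNReal.ofReal (φ x t) := by
          rw [hKdef]; ring
  -- choose ε
  set Kr : ℝ := K.toReal with hKr
  have hKrnn : 0 ≤ Kr := ENNReal.toReal_nonneg
  have hKle : K ≤ ENNReal.ofReal Kr := le_of_eq (ENNReal.ofReal_toReal hKtop).symm
  set ε : ℝ := min 1 ((Cl * (Kr + 1))⁻¹ ^ (1 / p)) with hεdef
  have hε0 : 0 < ε := lt_min one_pos (Real.rpow_pos_of_pos (by positivity) _)
  have hε1 : ε ≤ 1 := min_le_left _ _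
  have hεpow : Cl * ε ^ p ≤ (Kr + 1)⁻¹ := by
    have h1 : ε ^ p ≤ ((Cl * (Kr + 1))⁻¹ ^ (1 / p)) ^ p :=
      Real.rpow_le_rpow hε0.le (min_le_right _ _) hp.le
    have h2 : ((Cl * (Kr + 1))⁻¹ ^ (1 / p)) ^ p = (Cl * (Kr + 1))⁻¹ := by
      rw [← Real.rpow_mul (by positivity : (0:ℝ) ≤ (Cl * (Kr + 1))⁻¹), one_div,
        inv_mul_cancel₀ hp.ne', Real.rpow_one]
    have h3 : Cl * ε ^ p ≤ Cl * (Cl * (Kr + 1))⁻¹ :=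
      mul_le_mul_of_nonneg_left (h1.trans h2.le) hCl.le
    calc Cl * ε ^ p ≤ Cl * (Cl * (Kr + 1))⁻¹ := h3
      _ = (Kr + 1)⁻¹ := by
          rw [mul_inv, ← mul_assoc, mul_inv_cancel₀ hCl.ne', one_mul]
  have hsmall : ENNReal.ofReal (Cl * ε ^ p) * K ≤ 1 := by
    calc ENNReal.ofReal (Cl * ε ^ p) * K
        ≤ ENNReal.ofReal ((Kr + 1)⁻¹) * ENNReal.ofReal Kr :=
          mul_le_mul' (ENNReal.ofReal_le_ofReal hεpow) hKle
      _ = ENNReal.ofReal ((Kr + 1)⁻¹ * Kr) := (ENNReal.ofReal_mul (by positivity)).symm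
      _ ≤ 1 := by
          refine ENNReal.ofReal_le_one.mpr ?_
          rw [← div_eq_inv_mul]
          exact div_le_one_of_le₀ (by linarith) (by positivity)
  -- rewriting the Luxemburg integrand as a set integral
  have hres : ∀ (s : Set (EuclideanSpace ℝ (Fin n))), MeasurableSet s → ∀ l' : ℝ,
      (∫⁻ x, ENNReal.ofReal (φ x (|Set.indicator s (fun _ => (1:ℝ)) x| / l')))
        = ∫⁻ x in s, ENNReal.ofReal (φ x (1 / l')) := by
    intro s hs l'
    rw [← lintegral_indicator hs]
    apply lintegral_congr
    intro x
    by_cases hx : x ∈ s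
    · rw [Set.indicator_of_mem hx, Set.indicator_of_mem hx]
      norm_num
    · rw [Set.indicator_of_notMem hx, Set.indicator_of_notMem hx]
      simp [h0 x]
  -- comparison of the two Luxemburg norms
  have hcmp : ENNReal.ofReal ε *
      luxNorm volume φ (Set.indicator (ball x₀ (3 * c * r₀)) fun _ => (1 : ℝ)) ≤
      luxNorm volume φ (Set.indicator (ball x₀ r₀) fun _ => (1 : ℝ)) := by
    conv_rhs => rw [luxNorm]
    refine le_iInf fun l => le_iInf fun hl => le_iInf fun hcond => ?_
    rw [hres _ measurableSet_ball l] at hcond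
    have hlε : 0 < l / ε := div_pos hl hε0
    have hbigcond : (∫⁻ x, ENNReal.ofReal
        (φ x (|Set.indicator (ball x₀ (3 * c * r₀)) (fun _ => (1:ℝ)) x| / (l / ε)))) ≤ 1 := by
      rw [hres _ measurableSet_ball (l / ε)]
      have hptwise : ∀ x, ENNReal.ofReal (φ x (1 / (l / ε)))
          ≤ ENNReal.ofReal (Cl * ε ^ p) * ENNReal.ofReal (φ x (1 / l)) := by
        intro x
        rw [← ENNReal.ofReal_mul (by positivity)]
        apply ENNReal.ofReal_le_ofReal
        have h1 : 1 / (l / ε) = ε * (1 / l) := by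
          field_simp
        rw [h1]
        exact hlow x ε (1 / l) hε0.le hε1 (by positivity)
      calc (∫⁻ x in ball x₀ (3 * c * r₀), ENNReal.ofReal (φ x (1 / (l / ε))))
          ≤ ∫⁻ x in ball x₀ (3 * c * r₀),
              ENNReal.ofReal (Cl * ε ^ p) * ENNReal.ofReal (φ x (1 / l)) :=
            lintegral_mono fun x => hptwise x
        _ = ENNReal.ofReal (Cl * ε ^ p) *
            ∫⁻ x in ball x₀ (3 * c * r₀), ENNReal.ofReal (φ x (1 / l)) :=
            lintegral_const_mul _ (hmeas _).ennreal_ofReal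
        _ ≤ ENNReal.ofReal (Cl * ε ^ p) *
            (K * ∫⁻ x in ball x₀ r₀, ENNReal.ofReal (φ x (1 / l))) :=
            mul_le_mul_right (hKey (1 / l) (by positivity)) _
        _ ≤ ENNReal.ofReal (Cl * ε ^ p) * (K * 1) :=
            mul_le_mul_right (mul_le_mul_right hcond _) _
        _ = ENNReal.ofReal (Cl * ε ^ p) * K := by rw [mul_one]
        _ ≤ 1 := hsmall
    have hNble : luxNorm volume φ
        (Set.indicator (ball x₀ (3 * c * r₀)) fun _ => (1 : ℝ)) ≤ ENNReal.ofReal (l / ε) := by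
      rw [luxNorm]
      exact iInf_le_of_le (l / ε) (iInf_le_of_le hlε (iInf_le_of_le hbigcond le_rfl))
    calc ENNReal.ofReal ε *
        luxNorm volume φ (Set.indicator (ball x₀ (3 * c * r₀)) fun _ => (1 : ℝ))
        ≤ ENNReal.ofReal ε * ENNReal.ofReal (l / ε) := mul_le_mul_right hNble _
      _ = ENNReal.ofReal l := by
          rw [← ENNReal.ofReal_mul hε0.le, mul_comm, div_mul_cancel₀ _ hε0.ne']
  set Nb : ℝ≥0∞ :=
    luxNorm volume φ (Set.indicator (ball x₀ (3 * c * r₀)) fun _ => (1 : ℝ)) with hNb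
  have hNb_pos : 0 < Nb :=
    luxNorm_indicator_pos φ hmono hlim hmeas _ measurableSet_ball
      (measure_ball_pos volume x₀ hρ).ne'
  have hC₀le : C₀ ≤ ε⁻¹ * (Nb⁻¹).toReal := by
    have h1 : (luxNorm volume φ (Set.indicator (ball x₀ r₀) fun _ => (1 : ℝ)))⁻¹
        ≤ (ENNReal.ofReal ε)⁻¹ * Nb⁻¹ := by
      rw [← ENNReal.mul_inv (Or.inl (ENNReal.ofReal_pos.mpr hε0).ne')
        (Or.inl ENNReal.ofReal_ne_top)]
      exact ENNReal.inv_le_inv.mpr hcmp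
    have h2 : (ENNReal.ofReal ε)⁻¹ * Nb⁻¹ ≠ ⊤ :=
      ENNReal.mul_ne_top (ENNReal.inv_ne_top.mpr (ENNReal.ofReal_pos.mpr hε0).ne')
        (ENNReal.inv_ne_top.mpr hNb_pos.ne')
    have h3 := ENNReal.toReal_mono h2 h1
    rw [ENNReal.toReal_mul,
      show ((ENNReal.ofReal ε)⁻¹).toReal = ε⁻¹ by
        rw [ENNReal.toReal_inv, ENNReal.toReal_ofReal hε0.le]] at h3
    exact h3
  have hkabs : |k| ≤ C₀ * v₀ := by
    have h := norm_setIntegral_le_of_norm_le_const (μ := volume) (s := ball x₀ r₀)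
      (f := a) (C := C₀) measure_ball_lt_top
      (fun x _ => by simpa [Real.norm_eq_abs] using habd x)
    simpa [Real.norm_eq_abs, ← hk, ← hv₀, measureReal_def] using h
  have hbound : ∀ x, |tildeAtom a x₀ r₀ x₁ r₁ x| ≤ C₀ * (1 + v₀ / v) := by
    intro x
    rw [htA]
    simp only
    by_cases hx : x ∈ ball x₁ r₁
    · rw [Set.indicator_of_mem hx, mul_one]
      have h1 : |a x| ≤ C₀ := habd x
      have h2 : |k / v| ≤ C₀ * v₀ / v := by
        rw [abs_div, abs_of_pos hv_pos]
        gcongr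
      calc |a x - k / v| ≤ |a x| + |k / v| := abs_sub _ _
        _ ≤ C₀ + C₀ * v₀ / v := add_le_add h1 h2
        _ = C₀ * (1 + v₀ / v) := by field_simp
    · rw [Set.indicator_of_notMem hx, mul_zero, sub_zero]
      have h1 : |a x| ≤ C₀ := habd x
      have h2 : 0 ≤ v₀ / v := div_nonneg hv₀_pos.le hv_pos.le
      nlinarith
  refine ⟨hpart1, hpart2, ⟨ε⁻¹ * (1 + v₀ / v), ?_, ?_⟩, hpart4⟩
  · have h2 : 0 < v₀ / v := div_pos hv₀_pos hv_pos
    positivity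
  · intro x
    have h3 : 0 < 1 + v₀ / v := by positivity
    calc |tildeAtom a x₀ r₀ x₁ r₁ x| ≤ C₀ * (1 + v₀ / v) := hbound x
      _ ≤ (ε⁻¹ * (Nb⁻¹).toReal) * (1 + v₀ / v) :=
          mul_le_mul_of_nonneg_right hC₀le h3.le
      _ = (ε⁻¹ * (1 + v₀ / v)) * (Nb⁻¹).toReal := by ring
end
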